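/- arXiv:1510.06064 — 10 statements merged into one kernel-verified Lean document; each statement's English description precedes it below -/
import Mathlib

section
/- Fix a positive integer a. If (m₁, k₁) and (m₂, k₂) are two distinct pairs of positive integers, each satisfying a·S_{k_i}(m_i) = m_i^{k_i} for i = 1, 2, then m₁ ≠ m₂ and k₁ ≠ k₂. In other words, among the solutions (m, k) of a·S_k(m) = m^k, each value of m occurs for at most one k, and each value of k occurs for at most one m. -/
/-- `S k m = 1^k + 2^k + ⋯ + (m-1)^k`. -/
def S (k m : ℕ) : ℕ := ∑ j ∈ Finset.Ico 1 m, j ^ k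

lemma S_pos {k m : ℕ} (hm : 2 ≤ m) : 0 < S k m := by
  unfold S
  apply Finset.sum_pos
  · intro j hj
    simp only [Finset.mem_Ico] at hj
    exact Nat.pow_pos hj.1
  · exact ⟨1, by simp [Finset.mem_Ico]; omega⟩

lemma stepk {m : ℕ} (hm : 2 ≤ m) (k : ℕ) : S (k+1) m < m * S k m := by
  unfold S
  rw [Finset.mul_sum]
  apply Finset.sum_lt_sum_of_nonempty
  · exact ⟨1, by simp [Finset.mem_Ico]; omega⟩
  · intro j hj
    simp only [Finset.mem_Ico] at hj
    calc j ^ (k+1) = j ^ k * j := pow_succ j k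
    _ < j ^ k * m := by
        exact Nat.mul_lt_mul_of_le_of_lt (le_refl _) hj.2 (Nat.pow_pos hj.1)
    _ = m * j ^ k := Nat.mul_comm _ _

lemma lemA {m : ℕ} (hm : 2 ≤ m) {k l : ℕ} (h : k < l) :
    m ^ k * S l m < m ^ l * S k m := by
  have hmpos : (0:ℕ) < m := by omega
  induction l, h using Nat.le_induction with
  | base =>
    calc m ^ k * S (k+1) m < m ^ k * (m * S k m) :=
          mul_lt_mul_of_pos_left (stepk hm k) (pow_pos hmpos k)
    _ = m ^ (k+1) * S k m := by ring
  | succ l hl ih =>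
    calc m ^ k * S (l+1) m < m ^ k * (m * S l m) :=
          mul_lt_mul_of_pos_left (stepk hm l) (pow_pos hmpos k)
    _ = m * (m ^ k * S l m) := by ring
    _ < m * (m ^ l * S k m) := mul_lt_mul_of_pos_left ih hmpos
    _ = m ^ (l+1) * S k m := by ring

lemma stepm {m : ℕ} (hm : 1 ≤ m) (k : ℕ) :
    (m+1) ^ k * S k m < m ^ k * S k (m+1) := by
  have h1 : (m+1) ^ k * S k m = ∑ j ∈ Finset.Ico 1 m, ((m+1) * j) ^ k := by
    unfold S; rw [Finset.mul_sum]; simp [mul_pow]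
  have h2 : ∑ j ∈ Finset.Ico 1 m, ((m+1) * j) ^ k
      ≤ ∑ j ∈ Finset.Ico 1 m, (m * (j+1)) ^ k := by
    apply Finset.sum_le_sum
    intro j hj
    simp only [Finset.mem_Ico] at hj
    exact Nat.pow_le_pow_left (by nlinarith [hj.1, hj.2]) k
  have h3 : ∑ j ∈ Finset.Ico 1 m, (m * (j+1)) ^ k
      = ∑ j ∈ Finset.Ico 2 (m+1), (m * j) ^ k := by
    rw [Finset.sum_Ico_eq_sum_range, Finset.sum_Ico_eq_sum_range,
      show m + 1 - 2 = m - 1 from by omega]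
    apply Finset.sum_congr rfl
    intro i _
    congr 1
    ring
  have h4 : m ^ k * S k (m+1) = (m * 1) ^ k + ∑ j ∈ Finset.Ico 2 (m+1), (m * j) ^ k := by
    unfold S
    rw [Finset.mul_sum, Finset.sum_eq_sum_Ico_succ_bot (by omega : 1 < m+1)]
    simp [mul_pow]
  have hpos : 0 < m ^ k := pow_pos (by omega) k
  calc (m+1) ^ k * S k m ≤ ∑ j ∈ Finset.Ico 2 (m+1), (m * j) ^ k := by
        rw [h1]; exact h2.trans (le_of_eq h3)
  _ < m ^ k * S k (m+1) := by rw [h4]; simpa using hpos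

lemma lemB {k m n : ℕ} (hm : 1 ≤ m) (h : m < n) :
    n ^ k * S k m < m ^ k * S k n := by
  induction n, h using Nat.le_induction with
  | base => exact stepm hm k
  | succ n hn ih =>
    have hstep := stepm (by omega : 1 ≤ n) k
    have hS : 0 < S k n := S_pos (by omega)
    have hp : 0 < n ^ k := pow_pos (by omega) k
    have key := mul_lt_mul'' hstep ih (Nat.zero_le _) (Nat.zero_le _)
    have key' : (n ^ k * S k n) * ((n+1) ^ k * S k m)
        < (n ^ k * S k n) * (m ^ k * S k (n+1)) := by
      calc (n ^ k * S k n) * ((n+1) ^ k * S k m)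
          = ((n+1) ^ k * S k n) * (n ^ k * S k m) := by ring
      _ < (n ^ k * S k (n+1)) * (m ^ k * S k n) := key
      _ = (n ^ k * S k n) * (m ^ k * S k (n+1)) := by ring
    exact Nat.lt_of_mul_lt_mul_left key'

lemma keyk {a m k l : ℕ} (ha : 0 < a) (hm : 2 ≤ m)
    (h1 : a * S k m = m ^ k) (h2 : a * S l m = m ^ l) : k = l := by
  have cross : ∀ {k l : ℕ}, a * S k m = m ^ k → a * S l m = m ^ l →
      ¬ (k < l) := by
    intro k l h1 h2 hlt
    have e : a * (m ^ k * S l m) = a * (m ^ l * S k m) := by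
      calc a * (m ^ k * S l m) = m ^ k * (a * S l m) := by ring
      _ = m ^ k * m ^ l := by rw [h2]
      _ = m ^ l * (a * S k m) := by rw [h1]; ring
      _ = a * (m ^ l * S k m) := by ring
    exact absurd (Nat.eq_of_mul_eq_mul_left ha e) (Nat.ne_of_lt (lemA hm hlt))
  rcases lt_trichotomy k l with h | h | h
  · exact absurd h (cross h1 h2)
  · exact h
  · exact absurd h (cross h2 h1)

lemma keym {a m n k : ℕ} (ha : 0 < a) (hm : 2 ≤ m) (hn : 2 ≤ n)
    (h1 : a * S k m = m ^ k) (h2 : a * S k n = n ^ k) : m = n := by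
  have cross : ∀ {m n : ℕ}, 1 ≤ m → a * S k m = m ^ k → a * S k n = n ^ k →
      ¬ (m < n) := by
    intro m n hm1 h1 h2 hlt
    have e : a * (n ^ k * S k m) = a * (m ^ k * S k n) := by
      calc a * (n ^ k * S k m) = n ^ k * (a * S k m) := by ring
      _ = n ^ k * m ^ k := by rw [h1]
      _ = m ^ k * (a * S k n) := by rw [h2]; ring
      _ = a * (m ^ k * S k n) := by ring
    exact absurd (Nat.eq_of_mul_eq_mul_left ha e) (Nat.ne_of_lt (lemB hm1 hlt))
  rcases lt_trichotomy m n with h | h | h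
  · exact absurd h (cross (by omega) h1 h2)
  · exact h
  · exact absurd h (cross (by omega) h2 h1)

/-- Distinct solutions `(m₁, k₁)` and `(m₂, k₂)` of `a·S_k(m) = m^k` satisfy
`m₁ ≠ m₂` and `k₁ ≠ k₂`. -/
theorem distinct_solutions (a m₁ k₁ m₂ k₂ : ℕ) (ha : 0 < a)
    (hm₁ : 0 < m₁) (hk₁ : 0 < k₁) (hm₂ : 0 < m₂) (hk₂ : 0 < k₂)
    (h₁ : a * S k₁ m₁ = m₁ ^ k₁) (h₂ : a * S k₂ m₂ = m₂ ^ k₂)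
    (hne : (m₁, k₁) ≠ (m₂, k₂)) :
    m₁ ≠ m₂ ∧ k₁ ≠ k₂ := by
  have hm₁2 : 2 ≤ m₁ := by
    by_contra h
    have : m₁ = 1 := by omega
    subst this
    simp [S] at h₁
  have hm₂2 : 2 ≤ m₂ := by
    by_contra h
    have : m₂ = 1 := by omega
    subst this
    simp [S] at h₂
  constructor
  · intro h
    subst h
    exact hne (by rw [keyk ha hm₁2 h₁ h₂])
  · intro h
    subst h
    exact hne (by rw [keym ha hm₁2 hm₂2 h₁ h₂])
end

section
/- If a, k, m are positive integers with m ≥ 4 satisfying a·S_k(m) = m^k, then k is even. -/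
lemma key_dvd (k m : ℕ) (hk : Odd k) :
    ((m : ℤ) - 1) ∣ 2 * ∑ j ∈ Finset.range m, (j : ℤ) ^ k := by
  have h := Finset.sum_range_reflect (fun j => ((j : ℤ)) ^ k) m
  have h2 : 2 * ∑ j ∈ Finset.range m, (j : ℤ) ^ k
      = ∑ j ∈ Finset.range m, (((m - 1 - j : ℕ) : ℤ) ^ k + (j : ℤ) ^ k) := by
    rw [Finset.sum_add_distrib, h]; ring
  rw [h2]
  apply Finset.dvd_sum
  intro j hj
  have hjm : j ≤ m - 1 := by have := Finset.mem_range.mp hj; omega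
  have hm : 1 ≤ m := by have := Finset.mem_range.mp hj; omega
  have hcast : ((m - 1 - j : ℕ) : ℤ) = (m : ℤ) - 1 - j := by
    omega
  rw [hcast]
  have hd := sub_dvd_pow_sub_pow ((m : ℤ) - 1 - (j : ℤ)) (-(j : ℤ)) k
  rw [show ((m : ℤ) - 1 - (j : ℤ)) - (-(j : ℤ)) = (m : ℤ) - 1 from by ring] at hd
  rw [hk.neg_pow] at hd
  simpa [sub_neg_eq_add] using hd

/-- If `a·S_k(m) = m^k` with `m ≥ 4`, then `k` is even. -/
theorem k_even (a k m : ℕ) (ha : 0 < a) (hk : 0 < k) (hm4 : 4 ≤ m)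
    (heq : a * S k m = m ^ k) : Even k := by
  by_contra hodd
  rw [Nat.not_even_iff_odd] at hodd
  have hS : (∑ j ∈ Finset.range m, j ^ k) = S k m := by
    rw [Finset.range_eq_Ico, Finset.sum_eq_sum_Ico_succ_bot (by omega : 0 < m)]
    simp [S, zero_pow hk.ne']
  have hkey := key_dvd k m hodd
  have hScast : (∑ j ∈ Finset.range m, (j : ℤ) ^ k) = (S k m : ℤ) := by
    rw [← hS]; push_cast; rfl
  rw [hScast] at hkey
  have heqZ : (a : ℤ) * (S k m : ℤ) = (m : ℤ) ^ k := by exact_mod_cast heq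
  have hdvd : ((m : ℤ) - 1) ∣ 2 * (m : ℤ) ^ k := by
    rw [← heqZ]
    have : ((m : ℤ) - 1) ∣ (a : ℤ) * (2 * (S k m : ℤ)) := hkey.mul_left _
    convert this using 1; ring
  have hcop : IsCoprime ((m : ℤ) - 1) ((m : ℤ) ^ k) := by
    apply IsCoprime.pow_right
    exact ⟨-1, 1, by ring⟩
  have h2 : ((m : ℤ) - 1) ∣ 2 := (hcop.dvd_of_dvd_mul_right) hdvd
  have := Int.le_of_dvd (by norm_num) h2
  omega
end

section
/- Suppose a, k, m are positive integers with m ≥ 4 and k even satisfying a·S_k(m) = m^k. Then for every prime p dividing m, (p − 1) does not divide k. In particular, gcd(m, 6) = 1. -/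
namespace EMaux

lemma S_eq_range (k m : ℕ) (hk : 0 < k) : S k m = ∑ j ∈ Finset.range m, j ^ k := by
  rcases Nat.eq_zero_or_pos m with h | h
  · subst h; simp [S]
  · rw [Finset.range_eq_Ico, Finset.sum_eq_sum_Ico_succ_bot h]
    rw [zero_pow hk.ne', zero_add, S]

lemma sum_range_mul {M : Type*} [AddCommMonoid M] (g : ℕ → M) (q t : ℕ) :
    ∑ j ∈ Finset.range (q * t), g j
      = ∑ i ∈ Finset.range t, ∑ r ∈ Finset.range q, g (i * q + r) := by
  induction t with
  | zero => simp
  | succ t ih =>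
      rw [Nat.mul_succ, Finset.sum_range_add, ih, Finset.sum_range_succ]
      congr 1
      refine Finset.sum_congr rfl fun r _ => ?_
      congr 1
      ring

lemma S_mul_modEq (k q t : ℕ) (hk : 0 < k) :
    ((S k (q * t) : ℕ) : ZMod q) = (t : ZMod q) * ((S k q : ℕ) : ZMod q) := by
  rw [S_eq_range k _ hk, S_eq_range k q hk]
  push_cast
  rw [sum_range_mul (fun j => (j : ZMod q)^k) q t]
  have h1 : ∀ i ∈ Finset.range t,
      (∑ r ∈ Finset.range q, (((i * q + r : ℕ) : ZMod q))^k)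
        = ∑ r ∈ Finset.range q, ((r : ℕ) : ZMod q)^k := by
    intro i _
    refine Finset.sum_congr rfl fun r _ => ?_
    push_cast
    rw [ZMod.natCast_self]
    ring_nf
  rw [Finset.sum_congr rfl h1, Finset.sum_const, Finset.card_range, nsmul_eq_mul]

def U (k p e : ℕ) : ℕ := ∑ r ∈ (Finset.range (p^e)).filter (fun r => ¬ p ∣ r), r ^ k

lemma filter_dvd_eq (p n : ℕ) (hp : 0 < p) :
    (Finset.range (p*n)).filter (fun j => p ∣ j) = (Finset.range n).image (fun i => p * i) := by
  ext j
  simp only [Finset.mem_filter, Finset.mem_range, Finset.mem_image]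
  constructor
  · rintro ⟨hlt, i, rfl⟩
    exact ⟨i, (mul_lt_mul_iff_right₀ hp).mp hlt, rfl⟩
  · rintro ⟨i, hi, rfl⟩
    exact ⟨(mul_lt_mul_iff_right₀ hp).mpr hi, ⟨i, rfl⟩⟩

lemma S_pow_succ (k p e : ℕ) (hk : 0 < k) (hp : 0 < p) :
    S k (p^(e+1)) = U k p (e+1) + p^k * S k (p^e) := by
  rw [S_eq_range _ _ hk, S_eq_range _ _ hk, U]
  rw [← Finset.sum_filter_add_sum_filter_not (Finset.range (p^(e+1)))
      (fun r => ¬ p ∣ r) (fun j => j^k)]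
  congr 1
  have h1 : (Finset.range (p^(e+1))).filter (fun j => ¬ ¬ p ∣ j)
      = (Finset.range (p^(e+1))).filter (fun j => p ∣ j) := by
    simp only [not_not]
  rw [h1, show p^(e+1) = p * p^e from by ring, filter_dvd_eq p _ hp,
    Finset.sum_image (fun a _ b _ h => Nat.eq_of_mul_eq_mul_left hp h)]
  simp only [mul_pow, ← Finset.mul_sum]

lemma add_pow_sq_zero {R : Type*} [CommRing R] (r c : R) (h : c^2 = 0) (k : ℕ) :
    (r + c)^(k+1) = r^(k+1) + ((k:R)+1) * r^k * c := by
  induction k with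
  | zero => ring
  | succ k ih =>
      have h2 : (r + c)^(k+1+1) = ((r+c)^(k+1)) * (r + c) := by ring
      rw [h2, ih]
      push_cast
      linear_combination ((k:R) + 1) * r^k * h

lemma U_step (k p e : ℕ) (hp : p.Prime) (hk : 0 < k) (hkeven : Even k) (he : 1 ≤ e) :
    ((U k p (e+1) : ℕ) : ZMod (p^(e+1))) = (p : ZMod (p^(e+1))) * ((U k p e : ℕ) : ZMod (p^(e+1))) := by
  set N := p^(e+1) with hN
  -- square of p^e vanishes mod N
  have hsq : ((p : ZMod N)^e)^2 = 0 := by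
    have hd : N ∣ (p^e)^2 := by
      rw [← pow_mul]; exact pow_dvd_pow p (by omega)
    calc ((p:ZMod N)^e)^2 = (((p^e)^2 : ℕ) : ZMod N) := by push_cast; ring
    _ = 0 := (ZMod.natCast_eq_zero_iff _ _).mpr hd
  -- the vanishing correction coefficient
  have hzero : (k : ZMod N) * ((∑ i ∈ Finset.range p, (i:ℕ) : ℕ) : ZMod N) * (p : ZMod N)^e = 0 := by
    have hd : N ∣ k * (∑ i ∈ Finset.range p, i) * p^e := by
      have hp' : p ∣ k * (∑ i ∈ Finset.range p, i) := by
        rcases eq_or_ne p 2 with rfl | hodd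
        · exact Dvd.dvd.mul_right hkeven.two_dvd _
        · have h2 : (∑ i ∈ Finset.range p, i) * 2 = p * (p - 1) := Finset.sum_range_id_mul_two p
          have hpd : p ∣ (∑ i ∈ Finset.range p, i) * 2 := h2 ▸ Dvd.intro _ rfl
          have : p ∣ (∑ i ∈ Finset.range p, i) := by
            rcases (Nat.Prime.dvd_mul hp).mp hpd with h | h
            · exact h
            · exact absurd (Nat.le_of_dvd (by norm_num) h) (by
                have := hp.two_le
                intro hle
                interval_cases p <;> simp_all)
          exact this.mul_left k
      have : N = p * p^e := by rw [hN]; ring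
      rw [this]
      exact mul_dvd_mul hp' dvd_rfl
    calc (k : ZMod N) * ((∑ i ∈ Finset.range p, (i:ℕ) : ℕ) : ZMod N) * (p : ZMod N)^e
        = ((k * (∑ i ∈ Finset.range p, i) * p^e : ℕ) : ZMod N) := by push_cast; ring
    _ = 0 := (ZMod.natCast_eq_zero_iff _ _).mpr hd
  -- termwise key identity
  have key : ∀ i r : ℕ,
      (if ¬ p ∣ (i * p^e + r) then (((i * p^e + r : ℕ)) : ZMod N)^k else 0)
        = (if ¬ p ∣ r then (((r:ℕ) : ZMod N)^k
            + (k : ZMod N) * ((r:ℕ) : ZMod N)^(k-1) * ((i:ℕ) : ZMod N) * (p : ZMod N)^e) else 0) := by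
    intro i r
    have hpe : p ∣ i * p^e := Dvd.dvd.mul_left (dvd_pow_self p (by omega)) i
    have hdvd : p ∣ (i * p^e + r) ↔ p ∣ r := by
      constructor
      · intro h; have := (Nat.dvd_add_right hpe).mp h; exact this
      · intro h; exact Nat.dvd_add hpe h
    by_cases hr : p ∣ r
    · rw [if_neg (by simpa [hdvd] using hr), if_neg (by simpa using hr)]
    · rw [if_pos (by simpa [hdvd] using hr), if_pos hr]
      have hc : (((i:ℕ) : ZMod N) * (p : ZMod N)^e)^2 = 0 := by
        rw [mul_pow, hsq, mul_zero]
      have hb := add_pow_sq_zero ((r:ℕ) : ZMod N) (((i:ℕ) : ZMod N) * (p : ZMod N)^e) hc (k-1)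
      have hk1 : k - 1 + 1 = k := by omega
      rw [hk1] at hb
      have hcast : (((i * p^e + r : ℕ)) : ZMod N)
          = ((r:ℕ) : ZMod N) + ((i:ℕ) : ZMod N) * (p : ZMod N)^e := by push_cast; ring
      rw [hcast, hb]
      have : ((k - 1 : ℕ) : ZMod N) + 1 = (k : ZMod N) := by
        have : ((k - 1 : ℕ) : ZMod N) = (k : ZMod N) - 1 := by
          have : (1:ℕ) ≤ k := hk
          push_cast [Nat.cast_sub this]
          ring
        rw [this]; ring
      rw [this]; ring
  -- cast U as an if-sum
  have hUcast : ∀ e', ((U k p e' : ℕ) : ZMod N)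
      = ∑ r ∈ Finset.range (p^e'), (if ¬ p ∣ r then ((r:ℕ) : ZMod N)^k else 0) := by
    intro e'
    rw [U, Finset.sum_filter]
    push_cast
    refine Finset.sum_congr rfl fun r _ => ?_
    split_ifs <;> simp
  calc ((U k p (e+1) : ℕ) : ZMod N)
      = ∑ j ∈ Finset.range (p^e * p), (if ¬ p ∣ j then ((j:ℕ) : ZMod N)^k else 0) := by
        rw [hUcast (e+1), pow_succ]
    _ = ∑ i ∈ Finset.range p, ∑ r ∈ Finset.range (p^e),
          (if ¬ p ∣ (i * p^e + r) then (((i * p^e + r : ℕ)) : ZMod N)^k else 0) :=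
        sum_range_mul _ _ _
    _ = ∑ i ∈ Finset.range p, ∑ r ∈ Finset.range (p^e),
          (if ¬ p ∣ r then (((r:ℕ) : ZMod N)^k
            + (k : ZMod N) * ((r:ℕ) : ZMod N)^(k-1) * ((i:ℕ) : ZMod N) * (p : ZMod N)^e) else 0) :=
        Finset.sum_congr rfl fun i _ => Finset.sum_congr rfl fun r _ => key i r
    _ = ∑ i ∈ Finset.range p,
          ((∑ r ∈ Finset.range (p^e), (if ¬ p ∣ r then ((r:ℕ) : ZMod N)^k else 0))
            + (∑ r ∈ Finset.range (p^e), (if ¬ p ∣ r then (k : ZMod N) * ((r:ℕ) : ZMod N)^(k-1) else 0))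
              * ((i:ℕ) : ZMod N) * (p : ZMod N)^e) := by
        refine Finset.sum_congr rfl fun i _ => ?_
        rw [Finset.sum_mul, Finset.sum_mul, ← Finset.sum_add_distrib]
        refine Finset.sum_congr rfl fun r _ => ?_
        split_ifs <;> ring
    _ = (p : ZMod N) * ((U k p e : ℕ) : ZMod N)
        + (∑ r ∈ Finset.range (p^e), (if ¬ p ∣ r then (k : ZMod N) * ((r:ℕ) : ZMod N)^(k-1) else 0))
          * (∑ i ∈ Finset.range p, ((i:ℕ) : ZMod N)) * (p : ZMod N)^e := by
        rw [Finset.sum_add_distrib, Finset.sum_const, Finset.card_range, nsmul_eq_mul, hUcast e]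
        congr 1
        set C := (∑ r ∈ Finset.range (p^e), (if ¬ p ∣ r then (k : ZMod N) * ((r:ℕ) : ZMod N)^(k-1) else 0))
        calc ∑ i ∈ Finset.range p, C * ((i:ℕ) : ZMod N) * (p : ZMod N)^e
            = (C * (p : ZMod N)^e) * ∑ i ∈ Finset.range p, ((i:ℕ) : ZMod N) := by
              rw [Finset.mul_sum]
              exact Finset.sum_congr rfl fun i _ => by ring
        _ = C * (∑ i ∈ Finset.range p, ((i:ℕ) : ZMod N)) * (p : ZMod N)^e := by ring
    _ = (p : ZMod N) * ((U k p e : ℕ) : ZMod N) := by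
        have hsum : (∑ i ∈ Finset.range p, ((i:ℕ) : ZMod N))
            = ((∑ i ∈ Finset.range p, i : ℕ) : ZMod N) := by push_cast; rfl
        rw [hsum]
        have hfac : ∀ r : ℕ, (if ¬ p ∣ r then (k : ZMod N) * ((r:ℕ) : ZMod N)^(k-1) else 0)
            = (k : ZMod N) * (if ¬ p ∣ r then ((r:ℕ) : ZMod N)^(k-1) else 0) := by
          intro r; split_ifs <;> ring
        simp only [hfac, ← Finset.mul_sum]
        have : (k : ZMod N) * (∑ r ∈ Finset.range (p^e), (if ¬ p ∣ r then ((r:ℕ) : ZMod N)^(k-1) else 0))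
            * ((∑ i ∈ Finset.range p, i : ℕ) : ZMod N) * (p : ZMod N)^e = 0 := by
          have h0 := hzero
          calc (k : ZMod N) * (∑ r ∈ Finset.range (p^e), (if ¬ p ∣ r then ((r:ℕ) : ZMod N)^(k-1) else 0))
              * ((∑ i ∈ Finset.range p, i : ℕ) : ZMod N) * (p : ZMod N)^e
              = ((k : ZMod N) * ((∑ i ∈ Finset.range p, i : ℕ) : ZMod N) * (p : ZMod N)^e)
                * (∑ r ∈ Finset.range (p^e), (if ¬ p ∣ r then ((r:ℕ) : ZMod N)^(k-1) else 0)) := by ring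
          _ = 0 := by rw [h0, zero_mul]
        linear_combination this
    
lemma filter_range_prime (p : ℕ) (hp : p.Prime) :
    (Finset.range p).filter (fun r => ¬ p ∣ r) = Finset.Ico 1 p := by
  ext r
  simp only [Finset.mem_filter, Finset.mem_range, Finset.mem_Ico]
  constructor
  · rintro ⟨h1, h2⟩
    refine ⟨?_, h1⟩
    rcases Nat.eq_zero_or_pos r with rfl | h
    · exact absurd (dvd_zero p) h2
    · exact h
  · rintro ⟨h1, h2⟩
    exact ⟨h2, Nat.not_dvd_of_pos_of_lt h1 h2⟩

lemma U_base (k p : ℕ) (hp : p.Prime) (hk : 0 < k) (hdvd : (p-1) ∣ k) :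
    p^1 ∣ U k p 1 + p^0 := by
  haveI : Fact p.Prime := ⟨hp⟩
  rw [pow_one, pow_zero]
  rw [← (ZMod.natCast_eq_zero_iff _ _)]
  push_cast
  rw [U, pow_one]
  push_cast
  have h1 : ∀ r ∈ (Finset.range p).filter (fun r => ¬ p ∣ r), ((r:ℕ) : ZMod p)^k = 1 := by
    intro r hr
    simp only [Finset.mem_filter, Finset.mem_range] at hr
    have hne : ((r:ℕ) : ZMod p) ≠ 0 := by
      rw [Ne, ZMod.natCast_eq_zero_iff]
      exact hr.2
    have := ZMod.pow_card_sub_one_eq_one hne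
    calc ((r:ℕ) : ZMod p)^k = (((r:ℕ) : ZMod p)^(p-1))^(k/(p-1)) := by
          rw [← pow_mul, Nat.mul_div_cancel' hdvd]
    _ = 1 := by rw [this, one_pow]
  rw [Finset.sum_congr rfl h1, Finset.sum_const, filter_range_prime p hp, Nat.card_Ico,
    nsmul_eq_mul, mul_one]
  have : ((p - 1 : ℕ) : ZMod p) + 1 = ((p - 1 + 1 : ℕ) : ZMod p) := by push_cast; ring
  rw [this, Nat.sub_add_cancel hp.one_lt.le, ZMod.natCast_self]

lemma U_cong (k p : ℕ) (hp : p.Prime) (hk : 0 < k) (hkeven : Even k) (hdvd : (p-1) ∣ k) :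
    ∀ e, 1 ≤ e → p^e ∣ U k p e + p^(e-1) := by
  intro e
  induction e with
  | zero => omega
  | succ e ih =>
      intro _
      rcases Nat.eq_zero_or_pos e with rfl | he
      · simpa using U_base k p hp hk hdvd
      · have ihe := ih he
        have hstep := U_step k p e hp hk hkeven he
        have h1 : p^(e+1) ∣ p * (U k p e + p^(e-1)) := by
          rw [pow_succ, mul_comm (p^e) p]
          exact mul_dvd_mul_left p ihe
        have h2 : p * (U k p e + p^(e-1)) = p * U k p e + p^e := by
          rw [Nat.mul_add, ← pow_succ']
          congr 1
          congr 1
          omega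
        rw [h2] at h1
        rw [← (ZMod.natCast_eq_zero_iff _ _)] at h1 ⊢
        push_cast at h1 ⊢
        calc ((U k p (e+1) : ℕ) : ZMod (p^(e+1))) + (p : ZMod (p^(e+1)))^e
            = (p : ZMod (p^(e+1))) * ((U k p e : ℕ) : ZMod (p^(e+1))) + (p : ZMod (p^(e+1)))^e := by
              rw [hstep]
        _ = 0 := h1

lemma S_cong (k p : ℕ) (hp : p.Prime) (hk2 : 2 ≤ k) (hkeven : Even k) (hdvd : (p-1) ∣ k) :
    ∀ e, 1 ≤ e → p^e ∣ S k (p^e) + p^(e-1) := by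
  have hk : 0 < k := by omega
  intro e
  induction e with
  | zero => omega
  | succ e ih =>
      intro _
      have hU := U_cong k p hp hk hkeven hdvd (e+1) (by omega)
      rw [S_pow_succ k p e hk hp.pos]
      rcases Nat.eq_zero_or_pos e with rfl | he
      · simpa [S] using hU
      · have ihe := ih he
        have hSd : p^(e-1) ∣ S k (p^e) := by
          have h1 : p^(e-1) ∣ S k (p^e) + p^(e-1) :=
            dvd_trans (pow_dvd_pow p (by omega)) ihe
          have h2 := Nat.dvd_sub h1 dvd_rfl
          simpa using h2
        have h2 : p^(e+1) ∣ p^k * S k (p^e) := by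
          have h3 : p^(e+1) ∣ p^k * p^(e-1) := by
            rw [← pow_add]; exact pow_dvd_pow p (by omega)
          exact dvd_trans h3 (mul_dvd_mul_left _ hSd)
        have h4 := Nat.dvd_add hU h2
        have h5 : U k p (e+1) + p^(e+1-1) + p^k * S k (p^e)
            = U k p (e+1) + p^k * S k (p^e) + p^(e+1-1) := by ring
        rw [h5] at h4
        exact h4

lemma S_lower (k m : ℕ) (hm : 4 ≤ m) : (m-1)^k ≤ S k m := by
  have hmem : m - 1 ∈ Finset.Ico 1 m := Finset.mem_Ico.mpr ⟨by omega, by omega⟩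
  exact Finset.single_le_sum (f := fun j => j^k) (fun i _ => Nat.zero_le _) hmem

end EMaux

/-- If `a·S_k(m) = m^k` with `m ≥ 4` and `k` even, then for every prime `p`
dividing `m` we have `(p - 1) ∤ k`; in particular `gcd(m, 6) = 1`. -/
theorem no_prime_divisor_with_p_sub_one_dvd_k (a k m : ℕ) (ha : 0 < a)
    (hk : 0 < k) (hkeven : Even k) (hm4 : 4 ≤ m)
    (heq : a * S k m = m ^ k) :
    (∀ p : ℕ, p.Prime → p ∣ m → ¬ (p - 1) ∣ k) ∧ Nat.gcd m 6 = 1 := by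
  have hk2 : 2 ≤ k := by obtain ⟨c, rfl⟩ := hkeven; omega
  have hSlb : (m-1)^k ≤ S k m := EMaux.S_lower k m hm4
  have hS0 : 0 < S k m := lt_of_lt_of_le (pow_pos (by omega) k) hSlb
  have key : ∀ p : ℕ, p.Prime → p ∣ m → ¬ (p - 1) ∣ k := by
    intro p hp hpm hdvd
    have hm0 : m ≠ 0 := by omega
    have he1 : 1 ≤ m.factorization p := hp.factorization_pos_of_dvd hm0 hpm
    haveI : NeZero (p ^ m.factorization p) := ⟨pow_ne_zero _ hp.pos.ne'⟩
    have hmt : p ^ m.factorization p * (m / p ^ m.factorization p) = m :=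
      Nat.ordProj_mul_ordCompl_eq_self m p
    have hpt : ¬ p ∣ (m / p ^ m.factorization p) := Nat.not_dvd_ordCompl hp hm0
    have hScong : p ^ m.factorization p ∣
        S k m + (m / p ^ m.factorization p) * p ^ (m.factorization p - 1) := by
      have hS := EMaux.S_cong k p hp hk2 hkeven hdvd (m.factorization p) he1
      rw [← (ZMod.natCast_eq_zero_iff _ _)]
      have h0 : ((S k (p ^ m.factorization p) + p ^ (m.factorization p - 1) : ℕ) :
          ZMod (p ^ m.factorization p)) = 0 :=
        (ZMod.natCast_eq_zero_iff _ _).mpr hS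
      have hA := EMaux.S_mul_modEq k (p ^ m.factorization p) (m / p ^ m.factorization p) hk
      rw [hmt] at hA
      push_cast at h0 ⊢
      rw [hA]
      linear_combination ((m / p ^ m.factorization p : ℕ) : ZMod (p ^ m.factorization p)) * h0
    have hSd : p ^ (m.factorization p - 1) ∣ S k m := by
      have h1 : p ^ (m.factorization p - 1) ∣
          S k m + (m / p ^ m.factorization p) * p ^ (m.factorization p - 1) :=
        dvd_trans (pow_dvd_pow p (by omega)) hScong
      have h2 := Nat.dvd_sub h1 (Dvd.intro_left (m / p ^ m.factorization p) rfl)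
      simpa using h2
    have hSnd : ¬ p ^ m.factorization p ∣ S k m := by
      intro h
      have h2 : p ^ m.factorization p ∣ (m / p ^ m.factorization p) * p ^ (m.factorization p - 1) :=
        (Nat.dvd_add_right h).mp hScong
      rcases h2 with ⟨c, hc⟩
      have hpe : p ^ m.factorization p = p ^ (m.factorization p - 1) * p := by
        rw [← pow_succ]; congr 1; omega
      have h3 : (m / p ^ m.factorization p) * p ^ (m.factorization p - 1)
          = (p * c) * p ^ (m.factorization p - 1) := by rw [hc, hpe]; ring
      have h4 := Nat.eq_of_mul_eq_mul_right (pow_pos hp.pos (m.factorization p - 1)) h3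
      exact hpt ⟨c, h4⟩
    have hfS : (S k m).factorization p = m.factorization p - 1 := by
      have h1 := (hp.pow_dvd_iff_le_factorization hS0.ne').mp hSd
      have h2 : ¬ m.factorization p ≤ (S k m).factorization p :=
        fun h => hSnd ((hp.pow_dvd_iff_le_factorization hS0.ne').mpr h)
      omega
    have hfa : a.factorization p + (m.factorization p - 1) = k * m.factorization p := by
      have h := congrArg (fun n => n.factorization p) heq
      simp only [Nat.factorization_mul ha.ne' hS0.ne', Nat.factorization_pow,
        Finsupp.add_apply, Finsupp.smul_apply, smul_eq_mul] at h
      rw [hfS] at h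
      exact h
    have hkle : k ≤ a.factorization p := by
      have hle : k + (m.factorization p - 1) ≤ k * m.factorization p := by
        have h1 : m.factorization p - 1 ≤ k * (m.factorization p - 1) :=
          Nat.le_mul_of_pos_left _ (by omega)
        have h2 : k + k * (m.factorization p - 1) = k * m.factorization p := by
          have h3 : 1 + (m.factorization p - 1) = m.factorization p := by omega
          calc k + k * (m.factorization p - 1) = k * (1 + (m.factorization p - 1)) := by ring
          _ = k * m.factorization p := by rw [h3]
        calc k + (m.factorization p - 1) ≤ k + k * (m.factorization p - 1) :=
              Nat.add_le_add_left h1 k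
        _ = k * m.factorization p := h2
      have h5 : a.factorization p = k * m.factorization p - (m.factorization p - 1) :=
        Nat.eq_sub_of_add_eq hfa
      rw [h5]
      exact Nat.le_sub_of_add_le hle
    have hpk : p^k ∣ a := dvd_trans (pow_dvd_pow p hkle) (Nat.ordProj_dvd a p)
    have hak : 2^k ≤ a := le_trans (Nat.pow_le_pow_left hp.two_le k) (Nat.le_of_dvd ha hpk)
    have hcontr : (2*(m-1))^k ≤ m^k := by
      calc (2*(m-1))^k = 2^k * (m-1)^k := mul_pow 2 (m-1) k
      _ ≤ a * S k m := Nat.mul_le_mul hak hSlb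
      _ = m^k := heq
    have hlt : m^k < (2*(m-1))^k := Nat.pow_lt_pow_left (by omega) hk.ne'
    exact absurd hcontr (not_le.mpr hlt)
  refine ⟨key, ?_⟩
  have h2m : ¬ (2:ℕ) ∣ m := fun h => key 2 Nat.prime_two h (by norm_num)
  have h3m : ¬ (3:ℕ) ∣ m := fun h => key 3 Nat.prime_three h (by simpa using hkeven.two_dvd)
  have c2 : Nat.Coprime 2 m := (Nat.Prime.coprime_iff_not_dvd Nat.prime_two).mpr h2m
  have c3 : Nat.Coprime 3 m := (Nat.Prime.coprime_iff_not_dvd Nat.prime_three).mpr h3m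
  have c6 : Nat.Coprime 6 m := by
    have h := Nat.Coprime.mul c2 c3
    simpa using h
  exact c6.symm
end

section
/- Suppose a, k, m are positive integers with m ≥ 4 and k even satisfying a·S_k(m) = m^k, and let s be a positive integer. If a has no prime divisor p satisfying p < 2^s, then a divides m^{⌈k/s⌉ − 1}. -/
/-- If `a·S_k(m) = m^k` with `m ≥ 4` and `k` even, and `a` has no prime divisor
`p` with `p < 2^s`, then `a` divides `m` to the power `⌈k/s⌉ - 1`. -/
theorem dvd_pow_of_no_small_prime_divisor (a k m s : ℕ) (ha : 0 < a)
    (hk : 0 < k) (hkeven : Even k) (hm4 : 4 ≤ m) (hs : 0 < s)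
    (heq : a * S k m = m ^ k)
    (hnosmall : ∀ p : ℕ, p.Prime → p ∣ a → ¬ p < 2 ^ s) :
    a ∣ m ^ ((k + s - 1) / s - 1) := by
  have hm0 : 0 < m := by omega
  have hSge : (m - 1) ^ k ≤ S k m := by
    refine Finset.single_le_sum (f := fun j => j ^ k) (fun i _ => Nat.zero_le _) ?_
    simp only [Finset.mem_Ico]
    omega
  have ha2 : a < 2 ^ k := by
    by_contra h
    push_neg at h
    have h1 : 2 ^ k * (m - 1) ^ k ≤ a * S k m := Nat.mul_le_mul h hSge
    rw [heq] at h1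
    have h2 : m ^ k < (2 * (m - 1)) ^ k := by
      apply Nat.pow_lt_pow_left (by omega) (by omega)
    rw [mul_pow] at h2
    omega
  have hdvd : a ∣ m ^ k := ⟨S k m, heq.symm⟩
  have hane : a ≠ 0 := ha.ne'
  have hmt : m ^ ((k + s - 1) / s - 1) ≠ 0 := by positivity
  rw [← Nat.factorization_le_iff_dvd hane hmt]
  intro p
  rcases Nat.eq_zero_or_pos (a.factorization p) with hv | hv
  · simp [hv]
  · have hp : p.Prime := Nat.prime_of_mem_primeFactors (by
      rw [← Nat.support_factorization]; exact Finsupp.mem_support_iff.mpr hv.ne')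
    have hpa : p ∣ a := Nat.dvd_of_factorization_pos hv.ne'
    have hps : 2 ^ s ≤ p := le_of_not_gt (hnosmall p hp hpa)
    set v := a.factorization p with hvdef
    have hpva : p ^ v ∣ a := Nat.ordProj_dvd a p
    have hpvle : p ^ v ≤ a := Nat.le_of_dvd ha hpva
    have h2sv : 2 ^ (s * v) < 2 ^ k := by
      calc 2 ^ (s * v) = (2 ^ s) ^ v := by rw [pow_mul]
        _ ≤ p ^ v := Nat.pow_le_pow_left hps v
        _ ≤ a := hpvle
        _ < 2 ^ k := ha2
    have hsv : s * v < k := by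
      exact (Nat.pow_lt_pow_iff_right (by norm_num)).mp h2sv
    have hvle : v ≤ (k - 1) / s := by
      rw [Nat.le_div_iff_mul_le hs, mul_comm]
      omega
    have hteq : (k + s - 1) / s - 1 = (k - 1) / s := by
      have : k + s - 1 = (k - 1) + s := by omega
      rw [this, Nat.add_div_right _ hs]
      omega
    have hpm : p ∣ m := hp.dvd_of_dvd_pow (hpa.trans hdvd)
    have hem : 1 ≤ m.factorization p := by
      exact hp.factorization_pos_of_dvd hm0.ne' hpm
    rw [Nat.factorization_pow]
    simp only [Finsupp.smul_apply, smul_eq_mul]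
    calc v ≤ (k - 1) / s := hvle
      _ = (k + s - 1) / s - 1 := hteq.symm
      _ ≤ ((k + s - 1) / s - 1) * m.factorization p := Nat.le_mul_of_pos_right _ hem
end

section
/- Suppose a, k, m are positive integers with m ≥ 4 and k even satisfying a·S_k(m) = m^k. Then m divides the numerator of the Bernoulli number B_k. -/
open Finset

namespace EM
set_option linter.unusedSectionVars false

lemma two_pow_ge (v : ℕ) : v + 1 ≤ 2^v := Nat.lt_two_pow_self
lemma three_pow_ge (v : ℕ) (hv : 1 ≤ v) : v + 2 ≤ 3^v := by
  induction v with
  | zero => omega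
  | succ n ih =>
    rcases Nat.eq_zero_or_pos n with h|h
    · subst h; norm_num
    · have := ih h
      calc n + 1 + 2 ≤ 3 * (n + 2) := by omega
        _ ≤ 3 * 3^n := by omega
        _ = 3^(n+1) := by ring
lemma five_pow_ge (v : ℕ) (hv : 1 ≤ v) : v + 3 ≤ 5^v := by
  induction v with
  | zero => omega
  | succ n ih =>
    rcases Nat.eq_zero_or_pos n with h|h
    · subst h; norm_num
    · have := ih h
      calc n + 1 + 3 ≤ 5 * (n + 3) := by omega
        _ ≤ 5 * 5^n := by omega
        _ = 5^(n+1) := by ring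

lemma faulhaber_rat (k M : ℕ) (hk : 0 < k) :
    (S k M : ℚ) = ∑ i ∈ range (k+1),
      (k.choose i : ℚ) * bernoulli i * (M : ℚ) ^ (k+1-i) / ((k+1-i : ℕ) : ℚ) := by
  have h0 : (S k M : ℚ) = ∑ j ∈ range M, (j : ℚ) ^ k := by
    rcases Nat.eq_zero_or_pos M with h|h
    · subst h; simp [S]
    · rw [S]
      push_cast
      rw [range_eq_Ico, Finset.sum_eq_sum_Ico_succ_bot h]
      simp [zero_pow (by omega : k ≠ 0)]
  rw [h0, sum_range_pow]
  apply Finset.sum_congr rfl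
  intro i hi
  have hik : i ≤ k := by simpa using Nat.lt_succ_iff.mp (Finset.mem_range.mp hi)
  have hid : (k.choose i : ℚ) * ((k:ℚ) + 1) = ((k+1).choose i : ℚ) * ((k+1-i : ℕ) : ℚ) := by
    have := Nat.choose_mul_succ_eq k i
    exact_mod_cast this
  have hd0 : ((k+1-i : ℕ) : ℚ) ≠ 0 := by
    have : 0 < k + 1 - i := by omega
    exact_mod_cast this.ne'
  have hk1 : ((k:ℚ) + 1) ≠ 0 := by positivity
  rw [div_eq_div_iff hk1 hd0]
  linear_combination (-(bernoulli i * (M:ℚ) ^ (k+1-i))) * hid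

variable (p : ℕ) [hp : Fact p.Prime]

lemma hp1R : (1:ℝ) < p := by exact_mod_cast hp.out.one_lt
lemma hp0R : (0:ℝ) < p := by exact_mod_cast hp.out.pos

lemma zpow_mono {A B : ℤ} (h : A ≤ B) : (p:ℝ)^A ≤ (p:ℝ)^B :=
  zpow_le_zpow_right₀ (le_of_lt (hp1R p)) h

lemma pow_val_le {d : ℕ} (hd : d ≠ 0) : p ^ padicValNat p d ≤ d :=
  Nat.le_of_dvd (Nat.pos_of_ne_zero hd) pow_padicValNat_dvd

lemma val_le_one (d : ℕ) (hd : 2 ≤ d) : padicValNat p d + 1 ≤ d := by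
  have h1 := pow_val_le p (show d ≠ 0 by omega)
  have h2 : 2 ^ padicValNat p d ≤ p ^ padicValNat p d :=
    Nat.pow_le_pow_left hp.out.two_le _
  have := two_pow_ge (padicValNat p d)
  omega

lemma val_le_two (d : ℕ) (hd : 2 ≤ d) (hp2 : p ≠ 2) : padicValNat p d + 2 ≤ d := by
  rcases Nat.eq_zero_or_pos (padicValNat p d) with h|h
  · omega
  · have h1 := pow_val_le p (show d ≠ 0 by omega)
    have hp3 : 3 ≤ p := by have := hp.out.two_le; rcases Nat.lt_or_ge p 3 with h'|h' <;> omega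
    have h2 : 3 ^ padicValNat p d ≤ p ^ padicValNat p d := Nat.pow_le_pow_left hp3 _
    have := three_pow_ge (padicValNat p d) h
    omega

lemma val_le_three (d : ℕ) (hd : 1 ≤ d) (hp5 : 5 ≤ p) :
    padicValNat p d = 0 ∨ padicValNat p d + 3 ≤ d := by
  rcases Nat.eq_zero_or_pos (padicValNat p d) with h|h
  · exact Or.inl h
  · right
    have h1 := pow_val_le p (show d ≠ 0 by omega)
    have h2 : 5 ^ padicValNat p d ≤ p ^ padicValNat p d := Nat.pow_le_pow_left hp5 _
    have := five_pow_ge (padicValNat p d) h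
    omega

lemma norm_natCast_le_one (n : ℕ) : ‖(n : ℚ_[p])‖ ≤ 1 := by
  have := Padic.norm_int_le_one (p := p) (n : ℤ); simpa using this

lemma norm_natCast_eq (n : ℕ) (hn : n ≠ 0) :
    ‖(n : ℚ_[p])‖ = (p : ℝ) ^ (-(padicValNat p n : ℤ)) := by
  have h1 : ((n : ℚ) : ℚ_[p]) = (n : ℚ_[p]) := by push_cast; ring
  rw [← h1, Padic.eq_padicNorm,
    padicNorm.eq_zpow_of_nonzero (by exact_mod_cast hn)]
  rw [padicValRat.of_nat]
  push_cast
  ring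

lemma norm_natCast_le_pow (n e : ℕ) (h : p ^ e ∣ n) :
    ‖(n : ℚ_[p])‖ ≤ (p : ℝ) ^ (-(e : ℤ)) := by
  have h2 : ((p : ℤ)) ^ e ∣ (n : ℤ) := by exact_mod_cast h
  have := (Padic.norm_int_le_pow_iff_dvd (p := p) (n : ℤ) e).mpr h2
  simpa using this

lemma norm_nat_dvd_of_le (n e : ℕ) (h : ‖(n : ℚ_[p])‖ ≤ (p : ℝ) ^ (-(e : ℤ))) :
    p ^ e ∣ n := by
  have := (Padic.norm_int_le_pow_iff_dvd (p := p) (n : ℤ) e).mp (by simpa using h)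
  exact_mod_cast this

lemma norm_two_inv_le : ‖(2 : ℚ_[p])⁻¹‖ ≤ p := by
  rw [norm_inv]
  rcases eq_or_ne p 2 with h|h
  · subst h
    rw [show ((2:ℚ_[2])) = ((2:ℕ):ℚ_[2]) by norm_num, norm_natCast_eq 2 2 (by norm_num)]
    norm_num [padicValNat.self]
  · have : ‖((2:ℕ) : ℚ_[p])‖ = 1 := by
      rw [norm_natCast_eq p 2 (by norm_num), padicValNat.eq_zero_of_not_dvd]
      · norm_num
      · intro hdvd
        have := hp.out.two_le
        have := Nat.le_of_dvd (by norm_num) hdvd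
        omega
    rw [show ((2:ℚ_[p])) = ((2:ℕ):ℚ_[p]) by norm_num, this]
    norm_num
    exact_mod_cast le_of_lt (hp1R p)

lemma norm_two_inv_eq_one (hp2 : p ≠ 2) : ‖(2 : ℚ_[p])⁻¹‖ = 1 := by
  rw [norm_inv]
  have : ‖((2:ℕ) : ℚ_[p])‖ = 1 := by
    rw [norm_natCast_eq p 2 (by norm_num), padicValNat.eq_zero_of_not_dvd]
    · norm_num
    · intro hdvd
      have := hp.out.two_le
      have := Nat.le_of_dvd (by norm_num) hdvd
      omega
  rw [show ((2:ℚ_[p])) = ((2:ℕ):ℚ_[p]) by norm_num, this]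
  norm_num

/-- The `i`-th Faulhaber term in `ℚ_[p]`. -/
noncomputable def T (k M i : ℕ) : ℚ_[p] :=
  (k.choose i : ℚ_[p]) * ((bernoulli i : ℚ) : ℚ_[p]) * (M : ℚ_[p]) ^ (k+1-i) /
    ((k+1-i : ℕ) : ℚ_[p])

lemma faulhaber_padic (k M : ℕ) (hk : 0 < k) :
    ((S k M : ℕ) : ℚ_[p]) = ∑ i ∈ range (k+1), T p k M i := by
  have h := faulhaber_rat k M hk
  have h2 := congrArg (fun q : ℚ => (q : ℚ_[p])) h
  rw [show ((S k M : ℕ) : ℚ_[p]) = (((S k M : ℕ) : ℚ) : ℚ_[p]) by push_cast; ring, h2]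
  rw [Rat.cast_sum]
  apply Finset.sum_congr rfl
  intro i _
  rw [T]
  push_cast
  ring

lemma T_top (k M : ℕ) : T p k M k = ((bernoulli k : ℚ) : ℚ_[p]) * (M : ℚ_[p]) := by
  rw [T]; simp

lemma norm_T_le (k M i e : ℕ) (hi : i ≤ k) (hMe : p ^ e ∣ M)
    (hB : ‖((bernoulli i : ℚ) : ℚ_[p])‖ ≤ p) :
    ‖T p k M i‖ ≤ (p : ℝ) ^ (1 - ((k+1-i : ℕ) : ℤ) * e + (padicValNat p (k+1-i) : ℤ)) := by
  have hd0 : (k + 1 - i) ≠ 0 := by omega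
  have hp0 := hp0R p
  have hM : ‖(M : ℚ_[p])‖ ≤ (p:ℝ) ^ (-(e:ℤ)) := norm_natCast_le_pow p M e hMe
  have hMpow : ‖(M : ℚ_[p]) ^ (k+1-i)‖ ≤ (p:ℝ) ^ (-((k+1-i : ℕ) : ℤ) * e) := by
    rw [norm_pow]
    calc ‖(M : ℚ_[p])‖ ^ (k+1-i) ≤ ((p:ℝ) ^ (-(e:ℤ))) ^ (k+1-i) :=
          pow_le_pow_left₀ (norm_nonneg _) hM _
      _ = (p:ℝ) ^ (-((k+1-i : ℕ) : ℤ) * e) := by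
          rw [← zpow_natCast ((p:ℝ) ^ (-(e:ℤ))), ← zpow_mul]
          ring_nf
  have hdinv : ‖(((k+1-i : ℕ) : ℚ_[p]))⁻¹‖ = (p:ℝ) ^ ((padicValNat p (k+1-i) : ℤ)) := by
    rw [norm_inv, norm_natCast_eq p _ hd0, ← zpow_neg, neg_neg]
  rw [T, div_eq_mul_inv, norm_mul, norm_mul, norm_mul]
  calc ‖(k.choose i : ℚ_[p])‖ * ‖((bernoulli i : ℚ) : ℚ_[p])‖ * ‖(M : ℚ_[p]) ^ (k+1-i)‖ *
        ‖(((k+1-i : ℕ) : ℚ_[p]))⁻¹‖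
      ≤ 1 * (p:ℝ) * ((p:ℝ) ^ (-((k+1-i : ℕ) : ℤ) * e)) * ((p:ℝ) ^ ((padicValNat p (k+1-i) : ℤ))) := by
        apply mul_le_mul
        · apply mul_le_mul
          · apply mul_le_mul (norm_natCast_le_one p _) hB (norm_nonneg _) zero_le_one
          · exact hMpow
          · exact norm_nonneg _
          · positivity
        · exact le_of_eq hdinv
        · exact norm_nonneg _
        · positivity
    _ = (p : ℝ) ^ (1 - ((k+1-i : ℕ) : ℤ) * e + (padicValNat p (k+1-i) : ℤ)) := by
        rw [one_mul]
        have hcomb : ∀ A B : ℤ, (p:ℝ) * (p:ℝ) ^ A * (p:ℝ) ^ B = (p:ℝ) ^ (1 + A + B) := by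
          intro A B
          rw [zpow_add₀ (ne_of_gt hp0), zpow_add₀ (ne_of_gt hp0), zpow_one]
        rw [hcomb]
        congr 1
        ring

lemma T_odd_eq_zero (k M i : ℕ) (hodd : Odd i) (h1 : 1 < i) : T p k M i = 0 := by
  rw [T, bernoulli_eq_bernoulli'_of_ne_one (by omega), bernoulli'_eq_zero_of_odd hodd h1]
  simp

lemma T_one (k M : ℕ) (hk : 0 < k) :
    T p k M 1 = -((M : ℚ_[p]) ^ k * (2 : ℚ_[p])⁻¹) := by
  have h : (k + 1 - 1) = k := by omega
  rw [T, h, Nat.choose_one_right, bernoulli_one]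
  have hk0 : (k : ℚ_[p]) ≠ 0 := by exact_mod_cast hk.ne'
  have h2 : ((-1/2 : ℚ) : ℚ_[p]) = -(2 : ℚ_[p])⁻¹ := by push_cast; ring
  rw [h2]
  field_simp


lemma norm_sub_le_max (x y : ℚ_[p]) : ‖x - y‖ ≤ max ‖x‖ ‖y‖ := by
  have := Padic.nonarchimedean x (-y)
  simpa [sub_eq_add_neg] using this

/-- von Staudt-type bound: `p * bernoulli k` is `p`-integral. -/
lemma bern_le (k : ℕ) : ‖((bernoulli k : ℚ) : ℚ_[p])‖ ≤ p := by
  induction k using Nat.strong_induction_on with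
  | _ k ih =>
    rcases Nat.eq_zero_or_pos k with rfl|hk
    · simp only [bernoulli_zero, Rat.cast_one, norm_one]
      exact le_of_lt (hp1R p)
    have hF := faulhaber_padic p k p hk
    rw [Finset.sum_range_succ, T_top] at hF
    have hkey : ((bernoulli k : ℚ) : ℚ_[p]) * (p : ℚ_[p]) =
        ((S k p : ℕ) : ℚ_[p]) - ∑ i ∈ range k, T p k p i := by
      rw [hF]; ring
    have hE : ‖∑ i ∈ range k, T p k p i‖ ≤ 1 := by
      apply IsUltrametricDist.norm_sum_le_of_forall_le_of_nonneg zero_le_one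
      intro i hi
      have hik : i < k := Finset.mem_range.mp hi
      rcases Nat.even_or_odd i with hev|hodd
      · -- generic bound
        have h := norm_T_le p k p i 1 (le_of_lt hik) (by simpa using dvd_refl p)
          (ih i hik)
        refine h.trans ?_
        rw [show (1:ℝ) = (p:ℝ)^(0:ℤ) by simp]
        apply zpow_mono
        have hd2 : 2 ≤ k + 1 - i := by omega
        have := val_le_one p (k+1-i) hd2
        have hcast : (padicValNat p (k+1-i) : ℤ) + 1 ≤ ((k+1-i : ℕ) : ℤ) := by exact_mod_cast this
        have he1 : (1:ℤ) ≤ ((k+1-i : ℕ) : ℤ) := by exact_mod_cast (by omega : 1 ≤ k+1-i)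
        push_cast at hcast he1 ⊢
        nlinarith [hcast, he1]
      · rcases eq_or_ne i 1 with rfl|hi1
        · rw [T_one p k p hk, norm_neg, norm_mul]
          have h1 : ‖(p : ℚ_[p]) ^ k‖ = (p:ℝ) ^ (-(k:ℤ)) := Padic.norm_p_pow k
          rw [h1]
          calc (p:ℝ) ^ (-(k:ℤ)) * ‖(2:ℚ_[p])⁻¹‖ ≤ (p:ℝ) ^ (-(k:ℤ)) * p := by
                apply mul_le_mul_of_nonneg_left (norm_two_inv_le p) (by positivity)
            _ = (p:ℝ) ^ (1 - (k:ℤ)) := by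
                rw [sub_eq_add_neg, zpow_add₀ (ne_of_gt (hp0R p)), zpow_one]; ring
            _ ≤ 1 := by
                rw [show (1:ℝ) = (p:ℝ)^(0:ℤ) by simp]
                apply zpow_mono
                have : (1:ℤ) ≤ (k:ℤ) := by exact_mod_cast hk
                linarith
        · rw [T_odd_eq_zero p k p i hodd (by rcases hodd with ⟨t, rfl⟩; omega)]
          simp
    have hnorm : ‖((bernoulli k : ℚ) : ℚ_[p])‖ * (p:ℝ)⁻¹ ≤ 1 := by
      have := congrArg norm hkey
      rw [norm_mul, Padic.norm_p] at this
      rw [this]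
      exact (norm_sub_le_max p _ _).trans (by
        simp only [max_le_iff]
        exact ⟨norm_natCast_le_one p _, hE⟩)
    calc ‖((bernoulli k : ℚ) : ℚ_[p])‖ = (‖((bernoulli k : ℚ) : ℚ_[p])‖ * (p:ℝ)⁻¹) * p := by
          rw [mul_assoc, inv_mul_cancel₀ (ne_of_gt (hp0R p)), mul_one]
      _ ≤ 1 * p := by
          apply mul_le_mul_of_nonneg_right hnorm (le_of_lt (hp0R p))
      _ = p := one_mul _


lemma norm_M_pow_le (M e k : ℕ) (hMe : p ^ e ∣ M) :
    ‖(M : ℚ_[p]) ^ k‖ ≤ (p:ℝ) ^ (-((k:ℤ) * e)) := by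
  rw [norm_pow]
  calc ‖(M : ℚ_[p])‖ ^ k ≤ ((p:ℝ) ^ (-(e:ℤ))) ^ k :=
        pow_le_pow_left₀ (norm_nonneg _) (norm_natCast_le_pow p M e hMe) _
    _ = (p:ℝ) ^ (-((k:ℤ) * e)) := by
        rw [← zpow_natCast ((p:ℝ) ^ (-(e:ℤ))), ← zpow_mul]
        ring_nf

lemma T_le_case1 (k M i e : ℕ) (hke : Even k) (hk : 0 < k) (hik : i < k)
    (he : 1 ≤ e) (hMe : p ^ e ∣ M) :
    ‖T p k M i‖ ≤ (p:ℝ) ^ (-(e:ℤ)) := by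
  have hk2 : 2 ≤ k := by
    rcases hke with ⟨t, rfl⟩; omega
  rcases Nat.even_or_odd i with hev|hodd
  · have h := norm_T_le p k M i e (le_of_lt hik) hMe (bern_le p i)
    refine h.trans (zpow_mono p ?_)
    set d := k + 1 - i with hd
    have hd3 : 3 ≤ d := by
      have hkm : k % 2 = 0 := Nat.even_iff.mp hke
      have him : i % 2 = 0 := Nat.even_iff.mp hev
      omega
    have hdZ : (3:ℤ) ≤ (d:ℤ) := by exact_mod_cast hd3
    have heZ : (1:ℤ) ≤ (e:ℤ) := by exact_mod_cast he
    rcases eq_or_ne p 2 with rfl|hp2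
    · have hdodd : ¬ 2 ∣ d := by
        have hkm : k % 2 = 0 := Nat.even_iff.mp hke
        have him : i % 2 = 0 := Nat.even_iff.mp hev
        omega
      rw [padicValNat.eq_zero_of_not_dvd hdodd]
      have h3 : ((d:ℤ)-1) ≤ ((d:ℤ)-1)*e := le_mul_of_one_le_right (by linarith) heZ
      push_cast
      nlinarith [h3]
    · have hv := val_le_two p d (by omega) hp2
      have hvZ : (padicValNat p d : ℤ) + 2 ≤ (d:ℤ) := by exact_mod_cast hv
      have h3 : ((d:ℤ)-1) ≤ ((d:ℤ)-1)*e := le_mul_of_one_le_right (by linarith) heZ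
      nlinarith [h3, hvZ]
  · rcases eq_or_ne i 1 with rfl|hi1
    · rw [T_one p k M hk, norm_neg, norm_mul]
      calc ‖(M : ℚ_[p]) ^ k‖ * ‖(2:ℚ_[p])⁻¹‖ ≤ (p:ℝ) ^ (-((k:ℤ) * e)) * p := by
            apply mul_le_mul (norm_M_pow_le p M e k hMe) (norm_two_inv_le p)
              (norm_nonneg _) (by positivity)
        _ = (p:ℝ) ^ (1 - (k:ℤ) * e) := by
            rw [sub_eq_add_neg, zpow_add₀ (ne_of_gt (hp0R p)), zpow_one]; ring
        _ ≤ (p:ℝ) ^ (-(e:ℤ)) := by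
            apply zpow_mono
            have hkZ : (2:ℤ) ≤ (k:ℤ) := by exact_mod_cast hk2
            have heZ : (1:ℤ) ≤ (e:ℤ) := by exact_mod_cast he
            nlinarith [hkZ, heZ]
    · rw [T_odd_eq_zero p k M i hodd (by rcases hodd with ⟨t, rfl⟩; omega)]
      simp

lemma T_le_case2 (k M i e : ℕ) (hke : Even k) (hk : 0 < k) (hik : i < k)
    (he : 1 ≤ e) (hMe : p ^ e ∣ M) (hp5 : 5 ≤ p) :
    ‖T p k M i‖ ≤ (p:ℝ) ^ (-(2*(e:ℤ))) := by
  have hk2 : 2 ≤ k := by rcases hke with ⟨t, rfl⟩; omega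
  have heZ : (1:ℤ) ≤ (e:ℤ) := by exact_mod_cast he
  rcases Nat.even_or_odd i with hev|hodd
  · have h := norm_T_le p k M i e (le_of_lt hik) hMe (bern_le p i)
    refine h.trans (zpow_mono p ?_)
    set d := k + 1 - i with hd
    have hd3 : 3 ≤ d := by
      have hkm : k % 2 = 0 := Nat.even_iff.mp hke
      have him : i % 2 = 0 := Nat.even_iff.mp hev
      omega
    have hdZ : (3:ℤ) ≤ (d:ℤ) := by exact_mod_cast hd3
    rcases val_le_three p d (by omega) hp5 with hv|hv
    · rw [hv]
      have h3 : ((d:ℤ)-2) ≤ ((d:ℤ)-2)*e := le_mul_of_one_le_right (by linarith) heZ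
      push_cast
      nlinarith [h3]
    · have hvZ : (padicValNat p d : ℤ) + 3 ≤ (d:ℤ) := by exact_mod_cast hv
      have h3 : ((d:ℤ)-2) ≤ ((d:ℤ)-2)*e := le_mul_of_one_le_right (by linarith) heZ
      nlinarith [h3, hvZ]
  · rcases eq_or_ne i 1 with rfl|hi1
    · rw [T_one p k M hk, norm_neg, norm_mul, norm_two_inv_eq_one p (by omega), mul_one]
      refine (norm_M_pow_le p M e k hMe).trans (zpow_mono p ?_)
      have hkZ : (2:ℤ) ≤ (k:ℤ) := by exact_mod_cast hk2
      nlinarith [hkZ, heZ]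
    · rw [T_odd_eq_zero p k M i hodd (by rcases hodd with ⟨t, rfl⟩; omega)]
      simp
      positivity

/-- `S_k(p) ≡ p·B_k  (mod p²)`-style congruence, in norm form. -/
lemma key_congr (k : ℕ) (hk : 0 < k) (hke : Even k) :
    ‖((S k p : ℕ) : ℚ_[p]) - ((bernoulli k : ℚ) : ℚ_[p]) * (p : ℚ_[p])‖
      ≤ (p:ℝ) ^ (-(1:ℤ)) := by
  have hF := faulhaber_padic p k p hk
  rw [Finset.sum_range_succ, T_top] at hF
  have : ((S k p : ℕ) : ℚ_[p]) - ((bernoulli k : ℚ) : ℚ_[p]) * (p : ℚ_[p]) =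
      ∑ i ∈ range k, T p k p i := by rw [hF]; ring
  rw [this]
  apply IsUltrametricDist.norm_sum_le_of_forall_le_of_nonneg (by positivity)
  intro i hi
  exact T_le_case1 p k p i 1 hke hk (Finset.mem_range.mp hi) le_rfl (by simpa using dvd_refl p)


lemma Sp_mod (k : ℕ) (hk : 0 < k) :
    ((S k p : ℕ) : ZMod p) = if (p - 1) ∣ k then -1 else 0 := by
  classical
  have h1 : ((S k p : ℕ) : ZMod p) = ∑ j ∈ Ico 1 p, ((j : ZMod p))^k := by
    rw [S]; push_cast; rfl
  have h2 : ∑ j ∈ Ico 1 p, ((j : ZMod p))^k = ∑ x ∈ (univ : Finset (ZMod p)).erase 0, x^k := by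
    refine Finset.sum_nbij' (i := fun j => ((j : ZMod p))) (j := fun x => x.val) ?_ ?_ ?_ ?_ ?_
    · intro a ha
      simp only [mem_Ico] at ha
      simp only [mem_erase, mem_univ, and_true]
      intro h0
      have : (a : ZMod p).val = a := ZMod.val_cast_of_lt ha.2
      rw [h0] at this
      simp at this
      omega
    · intro x hx
      simp only [mem_erase, mem_univ, and_true] at hx
      simp only [mem_Ico]
      constructor
      · have : x.val ≠ 0 := fun h => hx ((ZMod.val_eq_zero x).mp h)
        omega
      · exact ZMod.val_lt x
    · intro a ha
      simp only [mem_Ico] at ha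
      exact ZMod.val_cast_of_lt ha.2
    · intro x _
      exact ZMod.natCast_rightInverse x
    · intro a _
      rfl
  have h3 : ∑ x ∈ (univ : Finset (ZMod p)).erase 0, x^k
      = if (p - 1) ∣ k then -1 else 0 := by
    let φ : (ZMod p)ˣ ↪ ZMod p := ⟨fun x => x, Units.val_injective⟩
    have hmap : (univ : Finset (ZMod p)ˣ).map φ = (univ : Finset (ZMod p)).erase 0 := by
      ext x
      simp only [mem_map, mem_univ, true_and, mem_erase, and_true]
      constructor
      · rintro ⟨u, rfl⟩
        exact Units.ne_zero u
      · intro hx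
        exact ⟨(isUnit_iff_ne_zero.mpr hx).unit, rfl⟩
    rw [← hmap, Finset.sum_map]
    have := FiniteField.sum_pow_units (ZMod p) k
    rw [ZMod.card] at this
    simpa [φ] using this
  rw [h1, h2, h3]

lemma norm_S_eq_one (k : ℕ) (hk : 0 < k) (hd : (p - 1) ∣ k) :
    ‖((S k p : ℕ) : ℚ_[p])‖ = 1 := by
  have hnd : ¬ (p : ℕ) ∣ S k p := by
    intro hdvd
    have h0 : ((S k p : ℕ) : ZMod p) = 0 := (ZMod.natCast_eq_zero_iff _ _).mpr hdvd
    rw [Sp_mod p k hk, if_pos hd] at h0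
    have : (1 : ZMod p) = 0 := by linear_combination -h0
    exact one_ne_zero this
  apply le_antisymm (norm_natCast_le_one p _)
  by_contra hlt
  push_neg at hlt
  have : ‖((S k p : ℤ) : ℚ_[p])‖ < 1 := by
    rw [show ((S k p : ℤ) : ℚ_[p]) = ((S k p : ℕ) : ℚ_[p]) by push_cast; ring]
    exact hlt
  have := (Padic.norm_intCast_lt_one_iff).mp this
  exact hnd (by exact_mod_cast this)

lemma norm_S_le (k : ℕ) (hk : 0 < k) (hnd : ¬ (p - 1) ∣ k) :
    ‖((S k p : ℕ) : ℚ_[p])‖ ≤ (p:ℝ) ^ (-(1:ℤ)) := by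
  have hdvd : (p : ℕ) ∣ S k p := by
    have h0 : ((S k p : ℕ) : ZMod p) = 0 := by rw [Sp_mod p k hk, if_neg hnd]
    exact (ZMod.natCast_eq_zero_iff _ _).mp h0
  have := norm_natCast_le_pow p (S k p) 1 (by simpa using hdvd)
  simpa using this

lemma bern_norm_dvd (k : ℕ) (hk : 0 < k) (hke : Even k) (hd : (p - 1) ∣ k) :
    ‖((bernoulli k : ℚ) : ℚ_[p])‖ = p := by
  set B := ((bernoulli k : ℚ) : ℚ_[p]) with hB
  set Sc := ((S k p : ℕ) : ℚ_[p]) with hSc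
  have h1 : ‖Sc‖ = 1 := norm_S_eq_one p k hk hd
  have h2 : ‖Sc - B * (p:ℚ_[p])‖ ≤ (p:ℝ) ^ (-(1:ℤ)) := key_congr p k hk hke
  have hlt : ‖-(Sc - B * (p:ℚ_[p]))‖ < ‖Sc‖ := by
    rw [norm_neg, h1]
    calc ‖Sc - B * (p:ℚ_[p])‖ ≤ (p:ℝ) ^ (-(1:ℤ)) := h2
      _ < 1 := by
        rw [show (1:ℝ) = (p:ℝ)^(0:ℤ) by simp]
        exact zpow_lt_zpow_right₀ (hp1R p) (by omega)
  have heq : B * (p:ℚ_[p]) = Sc + -(Sc - B * (p:ℚ_[p])) := by ring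
  have h3 : ‖B * (p:ℚ_[p])‖ = 1 := by
    have hne : ‖Sc‖ ≠ ‖-(Sc - B * (p:ℚ_[p]))‖ := ne_of_gt hlt
    rw [heq, Padic.add_eq_max_of_ne hne, h1]
    exact max_eq_left (le_of_lt (h1 ▸ hlt))
  rw [norm_mul, Padic.norm_p] at h3
  have hp0 := hp0R p
  field_simp at h3
  linarith [h3]

lemma bern_norm_not_dvd (k : ℕ) (hk : 0 < k) (hke : Even k) (hnd : ¬ (p - 1) ∣ k) :
    ‖((bernoulli k : ℚ) : ℚ_[p])‖ ≤ 1 := by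
  set B := ((bernoulli k : ℚ) : ℚ_[p]) with hB
  set Sc := ((S k p : ℕ) : ℚ_[p]) with hSc
  have h1 : ‖Sc‖ ≤ (p:ℝ) ^ (-(1:ℤ)) := norm_S_le p k hk hnd
  have h2 : ‖Sc - B * (p:ℚ_[p])‖ ≤ (p:ℝ) ^ (-(1:ℤ)) := key_congr p k hk hke
  have heq : B * (p:ℚ_[p]) = Sc - (Sc - B * (p:ℚ_[p])) := by ring
  have h3 : ‖B * (p:ℚ_[p])‖ ≤ (p:ℝ) ^ (-(1:ℤ)) := by
    rw [heq]
    exact (norm_sub_le_max p _ _).trans (max_le h1 h2)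
  rw [norm_mul, Padic.norm_p] at h3
  have hp0 := hp0R p
  have hinv : (p:ℝ) ^ (-(1:ℤ)) = (p:ℝ)⁻¹ := by simp
  rw [hinv] at h3
  calc ‖B‖ = ‖B‖ * (p:ℝ)⁻¹ * p := by field_simp
    _ ≤ (p:ℝ)⁻¹ * p := mul_le_mul_of_nonneg_right h3 (le_of_lt hp0)
    _ = 1 := by field_simp


lemma zpow_pow (x : ℝ) (hx : x ≠ 0) (A : ℤ) (k : ℕ) : (x ^ A) ^ k = x ^ (A * k) := by
  rw [← zpow_natCast (x ^ A), ← zpow_mul]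

end EM

open EM in
lemma size_bound (a k m : ℕ) (ha : 0 < a) (hk : 0 < k) (hm4 : 4 ≤ m)
    (heq : a * S k m = m ^ k) : 3^k * a ≤ 4^k := by
  have hmem : m - 1 ∈ Finset.Ico 1 m := by
    simp only [Finset.mem_Ico]; omega
  have hSm : (m-1)^k ≤ S k m := by
    rw [S]
    exact Finset.single_le_sum (f := fun j => j^k) (fun i _ => Nat.zero_le _) hmem
  have h1 : a * (m-1)^k ≤ m^k := by
    calc a * (m-1)^k ≤ a * S k m := Nat.mul_le_mul_left a hSm
      _ = m^k := heq
  have h3 : (3*m)^k ≤ (4*(m-1))^k := Nat.pow_le_pow_left (by omega) k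
  have h4 : (3^k * a) * (m-1)^k ≤ (4^k) * (m-1)^k := by
    calc (3^k * a) * (m-1)^k = 3^k * (a * (m-1)^k) := by ring
      _ ≤ 3^k * m^k := Nat.mul_le_mul_left _ h1
      _ = (3*m)^k := by rw [mul_pow]
      _ ≤ (4*(m-1))^k := h3
      _ = 4^k * (m-1)^k := by rw [mul_pow]
  have hpos : 0 < (m-1)^k := Nat.pow_pos (by omega)
  exact Nat.le_of_mul_le_mul_right h4 hpos

open EM in
lemma per_prime (p a k m : ℕ) [hp : Fact p.Prime] (ha : 0 < a) (hk : 0 < k)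
    (hkeven : Even k) (hm4 : 4 ≤ m) (heq : a * S k m = m ^ k) (hpm : p ∣ m) :
    (p:ℤ) ^ (padicValNat p m) ∣ (bernoulli k).num := by
  have hsize := size_bound a k m ha hk hm4 heq
  have hk2 : 2 ≤ k := by rcases hkeven with ⟨t, rfl⟩; omega
  have hm0 : m ≠ 0 := by omega
  set e := padicValNat p m with he_def
  have he : 1 ≤ e := by
    by_contra hlt
    have he0 : e = 0 := by omega
    have := pow_succ_padicValNat_not_dvd (p := p) hm0
    rw [← he_def, he0] at this
    simp at this
    exact this hpm
  have hp0 := hp0R p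
  have hp1 := hp1R p
  have hpe : p ^ e ∣ m := pow_padicValNat_dvd
  have hQ : (a : ℚ_[p]) * ((S k m : ℕ) : ℚ_[p]) = ((m : ℚ_[p]))^k := by
    exact_mod_cast congrArg (fun n : ℕ => (n : ℚ_[p])) heq
  set B := ((bernoulli k : ℚ) : ℚ_[p]) with hB_def
  set Sc := ((S k m : ℕ) : ℚ_[p]) with hSc_def
  set E := ∑ i ∈ Finset.range k, T p k m i with hE_def
  have hF : Sc = E + B * (m : ℚ_[p]) := by
    rw [hSc_def, faulhaber_padic p k m hk, Finset.sum_range_succ, T_top]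
  have hmnorm : ‖(m : ℚ_[p])‖ = (p:ℝ) ^ (-(e:ℤ)) := norm_natCast_eq p m hm0
  have hnormeq : ‖(a : ℚ_[p])‖ * ‖Sc‖ = (p:ℝ) ^ (-(e:ℤ) * k) := by
    have := congrArg norm hQ
    rw [norm_mul, norm_pow, hmnorm, zpow_pow _ (ne_of_gt hp0)] at this
    exact this
  -- final numeric contradiction helper
  have contra1 : ¬ ((p:ℝ)^(k:ℕ) ≤ (a:ℝ)) ∨ True := Or.inr trivial
  by_cases hd : (p - 1) ∣ k
  · -- case 1 : impossible
    exfalso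
    have hBn : ‖B‖ = p := bern_norm_dvd p k hk hkeven hd
    have hTk : ‖B * (m:ℚ_[p])‖ = (p:ℝ) ^ (1 - (e:ℤ)) := by
      rw [norm_mul, hBn, hmnorm, sub_eq_add_neg, zpow_add₀ (ne_of_gt hp0), zpow_one]
    have hE1 : ‖E‖ ≤ (p:ℝ) ^ (-(e:ℤ)) := by
      rw [hE_def]
      apply IsUltrametricDist.norm_sum_le_of_forall_le_of_nonneg (by positivity)
      intro i hi
      exact T_le_case1 p k m i e hkeven hk (Finset.mem_range.mp hi) he hpe
    have hlt : ‖E‖ < ‖B * (m:ℚ_[p])‖ := by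
      rw [hTk]
      calc ‖E‖ ≤ (p:ℝ) ^ (-(e:ℤ)) := hE1
        _ < (p:ℝ) ^ (1 - (e:ℤ)) := zpow_lt_zpow_right₀ hp1 (by omega)
    have hScn : ‖Sc‖ = (p:ℝ) ^ (1 - (e:ℤ)) := by
      rw [hF, Padic.add_eq_max_of_ne (ne_of_lt hlt), max_eq_right (le_of_lt hlt), hTk]
    have hanorm : ‖(a : ℚ_[p])‖ ≤ (p:ℝ) ^ (-(k:ℤ)) := by
      have h1 : ‖(a : ℚ_[p])‖ = (p:ℝ) ^ (-(e:ℤ) * k) / (p:ℝ) ^ (1 - (e:ℤ)) := by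
        rw [← hnormeq, hScn]
        field_simp
      rw [h1, ← zpow_sub₀ (ne_of_gt hp0)]
      apply zpow_mono
      have heZ : (1:ℤ) ≤ (e:ℤ) := by exact_mod_cast he
      have hkZ : (2:ℤ) ≤ (k:ℤ) := by exact_mod_cast hk2
      nlinarith [heZ, hkZ]
    have hdvd : p ^ k ∣ a := norm_nat_dvd_of_le p a k hanorm
    have hle : p ^ k ≤ a := Nat.le_of_dvd ha hdvd
    have h2k : 2 ^ k ≤ p ^ k := Nat.pow_le_pow_left hp.out.two_le k
    have h6 : 6 ^ k = 3 ^ k * 2 ^ k := by rw [← mul_pow]; norm_num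
    have h46 : 4 ^ k < 6 ^ k := Nat.pow_lt_pow_left (by norm_num) (by omega)
    have : 3 ^ k * a ≤ 4 ^ k := hsize
    nlinarith [Nat.mul_le_mul_left (3^k) (le_trans h2k hle)]
  · -- case 2
    have hp5 : 5 ≤ p := by
      have h2 := hp.out.two_le
      have hne2 : p ≠ 2 := by
        intro h; subst h; exact hd (by norm_num)
      have hne3 : p ≠ 3 := by
        intro h; subst h
        exact hd (by simpa using hkeven.two_dvd)
      have hne4 : p ≠ 4 := by
        intro h; subst h; exact absurd hp.out (by norm_num)
      omega
    have hB1 : ‖B‖ ≤ 1 := bern_norm_not_dvd p k hk hkeven hd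
    by_cases hsm : ‖B‖ ≤ (p:ℝ) ^ (-(e:ℤ))
    · -- conclude divisibility
      have hden : ((bernoulli k).den : ℚ) ≠ 0 := by
        exact_mod_cast (bernoulli k).den_ne_zero
      have hnum : (((bernoulli k).num : ℤ) : ℚ_[p]) = B * (((bernoulli k).den : ℕ) : ℚ_[p]) := by
        have hq : ((bernoulli k).num : ℚ) = bernoulli k * ((bernoulli k).den : ℚ) :=
          (div_eq_iff hden).mp (Rat.num_div_den _)
        have := congrArg (fun q : ℚ => (q : ℚ_[p])) hq
        push_cast at this ⊢
        exact this
      have hnn : ‖(((bernoulli k).num : ℤ) : ℚ_[p])‖ ≤ (p:ℝ) ^ (-(e:ℤ)) := by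
        rw [hnum, norm_mul]
        calc ‖B‖ * ‖(((bernoulli k).den : ℕ) : ℚ_[p])‖ ≤ ((p:ℝ) ^ (-(e:ℤ))) * 1 :=
          mul_le_mul hsm (norm_natCast_le_one p _) (norm_nonneg _) (by positivity)
        _ = (p:ℝ) ^ (-(e:ℤ)) := mul_one _
      exact (Padic.norm_int_le_pow_iff_dvd _ _).mp hnn
    · exfalso
      have hB0 : B ≠ 0 := by
        intro h
        apply hsm
        rw [h, norm_zero]
        positivity
      have hBlow : (p:ℝ) ^ (1 - (e:ℤ)) ≤ ‖B‖ := by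
        obtain hval := Padic.norm_eq_zpow_neg_valuation hB0
        rw [hval]
        push_neg at hsm
        rw [hval] at hsm
        have : -(e:ℤ) < -B.valuation := (zpow_lt_zpow_iff_right₀ hp1).mp hsm
        apply zpow_mono
        omega
      have hE2 : ‖E‖ ≤ (p:ℝ) ^ (-(2*(e:ℤ))) := by
        rw [hE_def]
        apply IsUltrametricDist.norm_sum_le_of_forall_le_of_nonneg (by positivity)
        intro i hi
        exact T_le_case2 p k m i e hkeven hk (Finset.mem_range.mp hi) he hpe hp5
      have hTk : (p:ℝ) ^ (1 - 2*(e:ℤ)) ≤ ‖B * (m:ℚ_[p])‖ := by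
        rw [norm_mul, hmnorm]
        calc (p:ℝ) ^ (1 - 2*(e:ℤ)) = (p:ℝ) ^ (1 - (e:ℤ)) * (p:ℝ) ^ (-(e:ℤ)) := by
              rw [← zpow_add₀ (ne_of_gt hp0)]; congr 1; ring
          _ ≤ ‖B‖ * (p:ℝ) ^ (-(e:ℤ)) :=
              mul_le_mul_of_nonneg_right hBlow (by positivity)
      have hlt : ‖E‖ < ‖B * (m:ℚ_[p])‖ := by
        calc ‖E‖ ≤ (p:ℝ) ^ (-(2*(e:ℤ))) := hE2
          _ < (p:ℝ) ^ (1 - 2*(e:ℤ)) := zpow_lt_zpow_right₀ hp1 (by omega)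
          _ ≤ ‖B * (m:ℚ_[p])‖ := hTk
      have hScn : ‖Sc‖ = ‖B * (m:ℚ_[p])‖ := by
        rw [hF, Padic.add_eq_max_of_ne (ne_of_lt hlt), max_eq_right (le_of_lt hlt)]
      have hSclow : (p:ℝ) ^ (1 - 2*(e:ℤ)) ≤ ‖Sc‖ := by rw [hScn]; exact hTk
      have hanorm : ‖(a : ℚ_[p])‖ ≤ (p:ℝ) ^ (-((k:ℤ)-1)) := by
        have hScpos : (0:ℝ) < ‖Sc‖ := lt_of_lt_of_le (by positivity) hSclow
        have h1 : ‖(a : ℚ_[p])‖ * (p:ℝ) ^ (1 - 2*(e:ℤ)) ≤ (p:ℝ) ^ (-(e:ℤ) * k) := by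
          rw [← hnormeq]
          exact mul_le_mul_of_nonneg_left hSclow (norm_nonneg _)
        have h2 : ‖(a : ℚ_[p])‖ ≤ (p:ℝ) ^ (-(e:ℤ) * k) / (p:ℝ) ^ (1 - 2*(e:ℤ)) := by
          rw [le_div_iff₀ (by positivity)]
          exact h1
        refine h2.trans ?_
        rw [← zpow_sub₀ (ne_of_gt hp0)]
        apply zpow_mono
        have heZ : (1:ℤ) ≤ (e:ℤ) := by exact_mod_cast he
        have hkZ : (2:ℤ) ≤ (k:ℤ) := by exact_mod_cast hk2
        nlinarith [heZ, hkZ]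
      have hanorm' : ‖(a : ℚ_[p])‖ ≤ (p:ℝ) ^ (-((k-1 : ℕ):ℤ)) := by
        refine hanorm.trans (zpow_mono p ?_)
        have : ((k-1:ℕ):ℤ) = (k:ℤ) - 1 := by
          push_cast [Nat.cast_sub (by omega : 1 ≤ k)]
          ring
        omega
      have hdvd : p ^ (k-1) ∣ a := norm_nat_dvd_of_le p a (k-1) hanorm'
      have hle : p ^ (k-1) ≤ a := Nat.le_of_dvd ha hdvd
      have h5k : 5 ^ (k-1) ≤ p ^ (k-1) := Nat.pow_le_pow_left hp5 _
      obtain ⟨j, rfl⟩ : ∃ j, k = j + 2 := ⟨k - 2, by omega⟩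
      have hj1 : j + 2 - 1 = j + 1 := by omega
      rw [hj1] at hle h5k
      have hfin : 4 ^ (j+2) < 3 ^ (j+2) * 5 ^ (j+1) := by
        have h15 : 4 ^ j ≤ 15 ^ j := Nat.pow_le_pow_left (by norm_num) j
        have h4pos : 0 < 4 ^ j := Nat.pow_pos (by norm_num)
        calc 4 ^ (j+2) = 16 * 4 ^ j := by ring
          _ < 45 * 4 ^ j := by nlinarith [h4pos]
          _ ≤ 45 * 15 ^ j := Nat.mul_le_mul_left _ h15
          _ = 3 ^ (j+2) * 5 ^ (j+1) := by ring_nf; rw [← mul_pow]; ring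
      have : 3 ^ (j+2) * 5 ^ (j+1) ≤ 3 ^ (j+2) * a :=
        Nat.mul_le_mul_left _ (le_trans h5k hle)
      omega

/-- If `a·S_k(m) = m^k` with `m ≥ 4` and `k` even, then `m` divides the
numerator of the Bernoulli number `B_k`. -/
theorem m_dvd_bernoulli_num (a k m : ℕ) (ha : 0 < a) (hk : 0 < k)
    (hkeven : Even k) (hm4 : 4 ≤ m) (heq : a * S k m = m ^ k) :
    (m : ℤ) ∣ (bernoulli k).num := by
  by_cases hnum : (bernoulli k).num = 0
  · simp [hnum]
  have hm0 : m ≠ 0 := by omega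
  have habs : (bernoulli k).num.natAbs ≠ 0 := fun h => hnum (Int.natAbs_eq_zero.mp h)
  have hdvd : m ∣ (bernoulli k).num.natAbs := by
    rw [← Nat.factorization_le_iff_dvd hm0 habs]
    intro q
    by_cases hq : q.Prime
    · by_cases hqm : q ∣ m
      · haveI : Fact q.Prime := ⟨hq⟩
        have h1 := per_prime q a k m ha hk hkeven hm4 heq hqm
        have h2 : q ^ (padicValNat q m) ∣ (bernoulli k).num.natAbs := by
          have h2' := Int.natAbs_dvd_natAbs.mpr h1
          simpa [Int.natAbs_pow] using h2'
        have h3 := (Nat.Prime.pow_dvd_iff_le_factorization hq habs).mp h2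
        rwa [Nat.factorization_def m hq]
      · rw [Nat.factorization_eq_zero_of_not_dvd hqm]
        exact Nat.zero_le _
    · rw [Nat.factorization_eq_zero_of_not_prime m hq]
      exact Nat.zero_le _
  have := Int.natCast_dvd_natCast.mpr hdvd
  calc (m : ℤ) ∣ ((bernoulli k).num.natAbs : ℤ) := this
    _ ∣ (bernoulli k).num := Int.natAbs_dvd.mpr dvd_rfl
end

section
/- Let q ≥ 5 be a prime and a be a positive integer. Then (2, q) is a helpful pair for a if and only if the Legendre symbol of a² + 36a + 36 modulo q equals −1. -/
/-- `(r, p)` is an irregular pair: `p` is prime, `r` is even with `2 ≤ r ≤ p - 3`,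
and `p` divides the numerator of the Bernoulli number `B_r`. -/
def IsIrregularPair (r p : ℕ) : Prop :=
  p.Prime ∧ Even r ∧ 2 ≤ r ∧ r ≤ p - 3 ∧ (p : ℤ) ∣ (bernoulli r).num

/-- A prime `p` is irregular if it divides the numerator of `B_r`
for some even `r` with `2 ≤ r ≤ p - 3`. -/
def IsIrregularPrime (p : ℕ) : Prop :=
  p.Prime ∧ ∃ r : ℕ, IsIrregularPair r p

/-- A prime is regular if it is not irregular. -/
def IsRegularPrime (p : ℕ) : Prop :=
  p.Prime ∧ ¬ IsIrregularPrime p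

/-- `(t, q)` is a helpful pair for `a`: `q` is prime, `t` is even with `2 ≤ t ≤ q - 3`,
`q ∤ a`, `a·S_t(c) ≢ c^t (mod q)` for `1 ≤ c ≤ q - 1`, and `(t, q)` is not an
irregular pair. -/
def IsHelpfulPair (a t q : ℕ) : Prop :=
  q.Prime ∧ Even t ∧ 2 ≤ t ∧ t ≤ q - 3 ∧ ¬ (q ∣ a) ∧
    (∀ c : ℕ, 1 ≤ c → c ≤ q - 1 → ¬ (a * S t c ≡ c ^ t [MOD q])) ∧
    ¬ IsIrregularPair t q

lemma S2_id (c : ℕ) : 6 * S 2 c + 3 * c ^ 2 = 2 * c ^ 3 + c := by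
  induction c with
  | zero => simp [S]
  | succ n ih =>
    have hS : S 2 (n + 1) = S 2 n + n ^ 2 := by
      rcases Nat.eq_zero_or_pos n with h | h
      · subst h; simp [S]
      · unfold S
        rw [Finset.sum_Ico_succ_top (by omega)]
    rw [hS]
    ring_nf
    ring_nf at ih
    nlinarith [ih]

lemma not_irregular_two (q : ℕ) (hq5 : 5 ≤ q) : ¬ IsIrregularPair 2 q := by
  rintro ⟨-, -, -, -, hdvd⟩
  have hb : bernoulli 2 = 1 / 6 := by
    rw [bernoulli_eq_bernoulli'_of_ne_one (by norm_num), bernoulli'_two]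
  rw [hb] at hdvd
  have h1 : (q : ℤ) ∣ 1 := by simpa [show Int.sign 6 = 1 from rfl] using hdvd
  have := Int.le_of_dvd one_pos h1
  omega

/-- The key equivalence: for `c` nonzero mod `q`, the congruence
`a * S 2 c ≡ c ^ 2` is equivalent to `c` being a root of the quadratic
`2a x² - (3a+6) x + a` mod `q`. -/
lemma key (q a c : ℕ) [Fact q.Prime] (hq5 : 5 ≤ q) (hc : (c : ZMod q) ≠ 0) :
    (a * S 2 c ≡ c ^ 2 [MOD q]) ↔
      2 * (a : ZMod q) * ((c : ZMod q) * (c : ZMod q)) +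
        (-(3 * (a : ZMod q) + 6)) * (c : ZMod q) + (a : ZMod q) = 0 := by
  have hqp : q.Prime := Fact.out
  have h6 : (6 : ZMod q) ≠ 0 := by
    intro h
    have h' : ((6 : ℕ) : ZMod q) = 0 := by exact_mod_cast h
    have hdvd : q ∣ 6 := (ZMod.natCast_eq_zero_iff 6 q).mp h'
    have h23 : q ∣ 2 * 3 := by simpa using hdvd
    rcases (Nat.Prime.dvd_mul hqp).mp h23 with h2 | h3
    · have := Nat.le_of_dvd (by norm_num) h2; omega
    · have := Nat.le_of_dvd (by norm_num) h3; omega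
  have hS : (6 : ZMod q) * (S 2 c : ZMod q) + 3 * (c : ZMod q) ^ 2
      = 2 * (c : ZMod q) ^ 3 + (c : ZMod q) := by
    have := congrArg (fun n : ℕ => (n : ZMod q)) (S2_id c)
    push_cast at this
    linear_combination this
  rw [← ZMod.natCast_eq_natCast_iff]
  push_cast
  constructor
  · intro h
    have h2 : (c : ZMod q) * (2 * (a : ZMod q) * ((c : ZMod q) * (c : ZMod q)) +
        (-(3 * (a : ZMod q) + 6)) * (c : ZMod q) + (a : ZMod q)) = 0 := by
      linear_combination (6 : ZMod q) * h - (a : ZMod q) * hS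
    rcases mul_eq_zero.mp h2 with h' | h'
    · exact absurd h' hc
    · exact h'
  · intro h
    have h2 : (6 : ZMod q) * ((a : ZMod q) * (S 2 c : ZMod q)) =
        (6 : ZMod q) * ((c : ZMod q) ^ 2) := by
      linear_combination (c : ZMod q) * h + (a : ZMod q) * hS
    exact mul_left_cancel₀ h6 h2

/-- Let `q ≥ 5` be a prime and `a` a positive integer. Then `(2, q)` is a
helpful pair for `a` if and only if the Legendre symbol of `a² + 36a + 36`
modulo `q` equals `-1`. -/
theorem helpful_pair_two_iff (q a : ℕ) (hq : q.Prime) (hq5 : 5 ≤ q)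
    (ha : 0 < a) :
    IsHelpfulPair a 2 q ↔
      @legendreSym q ⟨hq⟩ ((a : ℤ) ^ 2 + 36 * (a : ℤ) + 36) = -1 := by
  haveI : Fact q.Prime := ⟨hq⟩
  have h2 : (2 : ZMod q) ≠ 0 := by
    intro h
    have h' : ((2 : ℕ) : ZMod q) = 0 := by exact_mod_cast h
    have hdvd : q ∣ 2 := (ZMod.natCast_eq_zero_iff 2 q).mp h'
    have := Nat.le_of_dvd (by norm_num) hdvd
    omega
  haveI : NeZero (2 : ZMod q) := ⟨h2⟩
  rw [legendreSym.eq_neg_one_iff]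
  have hDcast : (((a : ℤ) ^ 2 + 36 * (a : ℤ) + 36 : ℤ) : ZMod q)
      = (a : ZMod q) ^ 2 + 36 * (a : ZMod q) + 36 := by push_cast; ring
  rw [hDcast]
  -- the discriminant identity
  have hdisc : ∀ α : ZMod q, discrim (2 * α) (-(3 * α + 6)) α = α ^ 2 + 36 * α + 36 := by
    intro α; rw [discrim]; ring
  constructor
  · rintro ⟨-, -, -, -, hqa, hc, -⟩ hsq
    set α : ZMod q := (a : ZMod q) with hα
    have hα0 : α ≠ 0 := by
      simpa [hα, ZMod.natCast_eq_zero_iff] using hqa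
    have h2α : (2 : ZMod q) * α ≠ 0 := mul_ne_zero h2 hα0
    rcases hsq with ⟨s, hs⟩
    obtain ⟨x, hx⟩ := exists_quadratic_eq_zero h2α
      ⟨s, by rw [hdisc]; exact hs⟩
    have hx0 : x ≠ 0 := by
      rintro rfl
      simp at hx
      exact hα0 hx
    set c : ℕ := x.val with hcdef
    haveI : NeZero q := ⟨by omega⟩
    have hcx : (c : ZMod q) = x := ZMod.natCast_rightInverse x
    have hc1 : 1 ≤ c := by
      rcases Nat.eq_zero_or_pos c with h | h
      · exfalso; apply hx0; rw [← hcx, h]; simp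
      · exact h
    have hc2 : c ≤ q - 1 := by
      have := ZMod.val_lt x
      omega
    apply hc c hc1 hc2
    rw [key q a c hq5 (hcx ▸ hx0)]
    rw [hcx]
    exact hx
  · intro hns
    have hqa : ¬ q ∣ a := by
      intro hdvd
      apply hns
      have : (a : ZMod q) = 0 := (ZMod.natCast_eq_zero_iff a q).mpr hdvd
      rw [this]
      exact ⟨6, by ring⟩
    have hα0 : (a : ZMod q) ≠ 0 := by
      simpa [ZMod.natCast_eq_zero_iff] using hqa
    refine ⟨hq, by decide, le_refl 2, by omega, hqa, ?_, not_irregular_two q hq5⟩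
    intro c hc1 hc2 hmod
    have hcne : (c : ZMod q) ≠ 0 := by
      intro h
      have := (ZMod.natCast_eq_zero_iff c q).mp h
      have := Nat.le_of_dvd (by omega) this
      omega
    rw [key q a c hq5 hcne] at hmod
    apply hns
    have := discrim_eq_sq_of_quadratic_eq_zero hmod
    rw [hdisc] at this
    exact ⟨2 * (2 * (a : ZMod q)) * (c : ZMod q) + -(3 * (a : ZMod q) + 6),
      by rw [this]; ring⟩
end

section
/- Let p be a prime such that 2p + 1 is an irregular prime dividing a, and let (r, 2p + 1) be an irregular pair. Let ℓ be a positive integer with p ∤ ℓ, let q₀, q₁, …, q_{ℓ−1} be odd primes (not necessarily distinct) with (q_j − 1) | 2ℓ for each j, and let t₀, t₁, …, t_{ℓ−1} be positive integers with t_j ≡ r + 2pj (mod q_j − 1) for 0 ≤ j ≤ ℓ − 1. Then for at least one index j with 0 ≤ j ≤ ℓ − 1, the pair (t_j, q_j) is not a helpful pair for a. -/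
/-- Let `p` be a prime such that `2p + 1` is an irregular prime dividing `a`,
and let `(r, 2p + 1)` be an irregular pair. Let `ℓ` be a positive integer with
`p ∤ ℓ`, let `q 0, …, q (ℓ-1)` be odd primes with `(q j - 1) ∣ 2ℓ`, and let
`t 0, …, t (ℓ-1)` be positive integers with `t j ≡ r + 2pj (mod q j - 1)`.
Then at least one pair `(t j, q j)` is not a helpful pair for `a`. -/
theorem exists_not_helpful_pair (a p r ℓ : ℕ) (q t : ℕ → ℕ)
    (ha : 0 < a) (hp : p.Prime) (hirr : IsIrregularPrime (2 * p + 1))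
    (hdvd : (2 * p + 1) ∣ a) (hpair : IsIrregularPair r (2 * p + 1))
    (hℓ : 0 < ℓ) (hpℓ : ¬ p ∣ ℓ)
    (hq : ∀ j, j < ℓ → (q j).Prime ∧ Odd (q j) ∧ (q j - 1) ∣ 2 * ℓ)
    (ht : ∀ j, j < ℓ → 0 < t j ∧ t j ≡ r + 2 * p * j [MOD q j - 1]) :
    ∃ j, j < ℓ ∧ ¬ IsHelpfulPair a (t j) (q j) := by
  haveI : NeZero ℓ := ⟨hℓ.ne'⟩
  obtain ⟨-, hreven, -, -, -⟩ := hpair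
  obtain ⟨s, hs⟩ := hreven
  have hcop : Nat.Coprime p ℓ := (Nat.Prime.coprime_iff_not_dvd hp).mpr hpℓ
  have hunit : IsUnit (p : ZMod ℓ) := (ZMod.isUnit_iff_coprime p ℓ).mpr hcop
  set x : ZMod ℓ := (-(s : ZMod ℓ)) * (p : ZMod ℓ)⁻¹ with hx
  refine ⟨x.val, ZMod.val_lt x, ?_⟩
  have hdvd1 : ℓ ∣ p * x.val + s := by
    have h0 : ((p * x.val + s : ℕ) : ZMod ℓ) = 0 := by
      push_cast
      rw [ZMod.natCast_val, ZMod.cast_id, hx,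
        mul_comm (-(s : ZMod ℓ)) ((p : ZMod ℓ)⁻¹), ← mul_assoc,
        ZMod.mul_inv_of_unit _ hunit]
      ring
    exact (ZMod.natCast_eq_zero_iff _ _).mp h0
  have hdvd2 : 2 * ℓ ∣ r + 2 * p * x.val := by
    have h2 := mul_dvd_mul_left 2 hdvd1
    have he : r + 2 * p * x.val = 2 * (p * x.val + s) := by rw [hs]; ring
    rwa [he]
  intro hhelp
  obtain ⟨hqprime, -, ht2, ht3, -, -, -⟩ := hhelp
  obtain ⟨-, -, hqdvd⟩ := hq _ (ZMod.val_lt x)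
  obtain ⟨htpos, htmod⟩ := ht _ (ZMod.val_lt x)
  have h0 : r + 2 * p * x.val ≡ 0 [MOD q x.val - 1] :=
    Nat.modEq_zero_iff_dvd.mpr (hqdvd.trans hdvd2)
  have hdvd3 : (q x.val - 1) ∣ t x.val :=
    Nat.modEq_zero_iff_dvd.mp (htmod.trans h0)
  have hle := Nat.le_of_dvd htpos hdvd3
  have hq2 := hqprime.two_le
  omega
end

section
/- Suppose a, k, m are positive integers with m ≥ 4 and k even satisfying a·S_k(m) = m^k. Then m − 1 and 2m − 1 are both squarefree, and every prime p dividing (m − 1)(2m − 1) satisfies (p − 1) | k. -/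
open Finset in
lemma T_eval (p k : ℕ) [Fact p.Prime] (hk : 0 < k) :
    (∑ x : ZMod p, x ^ k) = if (p - 1) ∣ k then (-1 : ZMod p) else 0 := by
  classical
  have h0 : (∑ x : ZMod p, x ^ k) = ∑ x : (ZMod p)ˣ, (x : ZMod p) ^ k := by
    let φ : (ZMod p)ˣ ↪ ZMod p := ⟨fun x ↦ x, fun _ _ h => Units.ext h⟩
    have : univ.map φ = univ \ {0} := by
      ext x
      simp only [mem_map, mem_univ, Function.Embedding.coeFn_mk, true_and, mem_sdiff,
        mem_singleton, φ]
      exact isUnit_iff_ne_zero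
    calc
      ∑ x : ZMod p, x ^ k = ∑ x ∈ univ \ {(0 : ZMod p)}, x ^ k := by
        rw [← sum_sdiff ({0} : Finset (ZMod p)).subset_univ, sum_singleton,
          zero_pow hk.ne', add_zero]
      _ = ∑ x : (ZMod p)ˣ, (x : ZMod p) ^ k := by simp [φ, ← this, univ.sum_map φ]; rfl
  rw [h0]
  have := FiniteField.sum_pow_units (ZMod p) k
  rwa [ZMod.card p] at this

lemma sum_range_mul (p c k : ℕ) [Fact p.Prime] :
    (∑ j ∈ Finset.range (c * p), ((j : ZMod p)) ^ k) = c * ∑ x : ZMod p, x ^ k := by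
  induction c with
  | zero => simp
  | succ c ih =>
    have : (c + 1) * p = c * p + p := by ring
    rw [this, Finset.sum_range_add, ih]
    have h2 : (∑ i ∈ Finset.range p, ((c * p + i : ℕ) : ZMod p) ^ k)
        = ∑ i ∈ Finset.range p, ((i : ZMod p)) ^ k := by
      apply Finset.sum_congr rfl
      intro i _
      push_cast
      rw [ZMod.natCast_self]
      ring_nf
    have h3 : (∑ i ∈ Finset.range p, ((i : ZMod p)) ^ k) = ∑ x : ZMod p, x ^ k := by
      refine Finset.sum_nbij' (fun j ↦ ((j : ZMod p))) (fun x ↦ x.val) ?_ ?_ ?_ ?_ ?_ <;>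
        simp [ZMod.val_cast_of_lt, ZMod.val_lt, ZMod.natCast_val, Finset.mem_range,
          Nat.mod_eq_of_lt]
      intro a ha; exact Nat.mod_eq_of_lt ha
    rw [h2, h3]
    push_cast
    ring

lemma S_cast (p k m : ℕ) (hk : 0 < k) (hm : 0 < m) :
    ((S k m : ℕ) : ZMod p) = ∑ j ∈ Finset.range m, ((j : ZMod p)) ^ k := by
  rw [Finset.range_eq_Ico, Finset.sum_eq_sum_Ico_succ_bot hm]
  simp only [S, Nat.cast_sum, Nat.cast_pow, Nat.cast_zero, zero_pow hk.ne', zero_add]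

lemma caseA (k m : ℕ) (hk : 0 < k) (hm4 : 4 ≤ m) {p : ℕ} [Fact p.Prime]
    (hdvd : p ∣ m - 1) (hS : ((S k m : ℕ) : ZMod p) ≠ 0) :
    ¬ (p * p ∣ m - 1) ∧ (p - 1) ∣ k := by
  have pp := (Fact.out : p.Prime)
  obtain ⟨c, hc⟩ := hdvd
  have hc' : m - 1 = c * p := by rw [hc, mul_comm]
  have hm1 : m = c * p + 1 := by have := pp.two_le; omega
  have hScast : ((S k m : ℕ) : ZMod p) = (c : ZMod p) * ∑ x : ZMod p, x ^ k := by
    rw [S_cast p k m hk (by omega), hm1, Finset.sum_range_succ, sum_range_mul]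
    have h0 : ((c * p : ℕ) : ZMod p) = 0 := by
      push_cast [ZMod.natCast_self]; ring
    rw [h0, zero_pow hk.ne', add_zero]
  have hc0 : (c : ZMod p) ≠ 0 := by
    intro h; rw [hScast, h, zero_mul] at hS; exact hS rfl
  have hT0 : (∑ x : ZMod p, x ^ k) ≠ 0 := by
    intro h; rw [hScast, h, mul_zero] at hS; exact hS rfl
  constructor
  · intro hsq
    rw [hc] at hsq
    have : p ∣ c := (mul_dvd_mul_iff_left pp.ne_zero).mp hsq
    exact hc0 ((ZMod.natCast_eq_zero_iff c p).mpr this)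
  · by_contra hnd
    rw [T_eval p k hk, if_neg hnd] at hT0
    exact hT0 rfl

lemma caseB (k m : ℕ) (hk : 0 < k) (hkeven : Even k) (hm4 : 4 ≤ m) {p : ℕ} [Fact p.Prime]
    (hdvd : p ∣ 2 * m - 1) (hS : ((S k m : ℕ) : ZMod p) ≠ 0) :
    ¬ (p * p ∣ 2 * m - 1) ∧ (p - 1) ∣ k := by
  have pp := (Fact.out : p.Prime)
  obtain ⟨c, hc⟩ := hdvd
  have hp2 : p ≠ 2 := by
    intro h; subst h; omega
  have h2ne : (2 : ZMod p) ≠ 0 := by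
    have : ((2 : ℕ) : ZMod p) ≠ 0 := by
      rw [Ne, ZMod.natCast_eq_zero_iff]
      intro h
      exact hp2 ((Nat.prime_dvd_prime_iff_eq pp Nat.prime_two).mp h)
    simpa using this
  have hcp : c * p = 2 * m - 1 := by rw [mul_comm]; omega
  have hsplit : (∑ j ∈ Finset.range (2 * m - 1), ((j : ZMod p)) ^ k)
      = 2 * ((S k m : ℕ) : ZMod p) := by
    have h21 : 2 * m - 1 = m + (m - 1) := by omega
    rw [h21, Finset.sum_range_add]
    have hfst : (∑ j ∈ Finset.range m, ((j : ZMod p)) ^ k) = ((S k m : ℕ) : ZMod p) :=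
      (S_cast p k m hk (by omega)).symm
    have hsnd : (∑ i ∈ Finset.range (m - 1), ((m + i : ℕ) : ZMod p) ^ k)
        = ((S k m : ℕ) : ZMod p) := by
      have step1 : ∀ i ∈ Finset.range (m - 1),
          ((m + i : ℕ) : ZMod p) ^ k = ((m - 1 - i : ℕ) : ZMod p) ^ k := by
        intro i hi
        rw [Finset.mem_range] at hi
        have hsum : (m + i) + (m - 1 - i) = 2 * m - 1 := by omega
        have hz : (((m + i) + (m - 1 - i) : ℕ) : ZMod p) = 0 := by
          rw [hsum, ← hcp]
          push_cast [ZMod.natCast_self]; ring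
        push_cast at hz
        have hneg : ((m + i : ℕ) : ZMod p) = -((m - 1 - i : ℕ) : ZMod p) := by
          push_cast
          linear_combination hz
        rw [hneg, hkeven.neg_pow]
      rw [Finset.sum_congr rfl step1]
      have step2 : (∑ i ∈ Finset.range (m - 1), ((m - 1 - i : ℕ) : ZMod p) ^ k)
          = ∑ j ∈ Finset.range (m - 1), ((j + 1 : ℕ) : ZMod p) ^ k := by
        rw [← Finset.sum_range_reflect (fun j => ((j + 1 : ℕ) : ZMod p) ^ k) (m - 1)]
        apply Finset.sum_congr rfl
        intro i hi
        rw [Finset.mem_range] at hi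
        congr 2
        omega
      rw [step2]
      rw [show ((S k m : ℕ) : ZMod p) = ∑ j ∈ Finset.Ico 1 m, ((j : ZMod p)) ^ k by
        simp [S]]
      rw [Finset.sum_Ico_eq_sum_range]
      apply Finset.sum_congr rfl
      intro i _
      congr 2
      omega
    rw [hfst, hsnd]; ring
  have hmain : (c : ZMod p) * ∑ x : ZMod p, x ^ k = 2 * ((S k m : ℕ) : ZMod p) := by
    rw [← sum_range_mul, hcp, hsplit]
  have h2S : (2 : ZMod p) * ((S k m : ℕ) : ZMod p) ≠ 0 :=
    mul_ne_zero h2ne hS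
  have hc0 : (c : ZMod p) ≠ 0 := by
    intro h; rw [h, zero_mul] at hmain; exact h2S hmain.symm
  have hT0 : (∑ x : ZMod p, x ^ k) ≠ 0 := by
    intro h; rw [h, mul_zero] at hmain; exact h2S hmain.symm
  constructor
  · intro hsq
    rw [hc] at hsq
    have : p ∣ c := (mul_dvd_mul_iff_left pp.ne_zero).mp hsq
    exact hc0 ((ZMod.natCast_eq_zero_iff c p).mpr this)
  · by_contra hnd
    rw [T_eval p k hk, if_neg hnd] at hT0
    exact hT0 rfl


/-- If `a·S_k(m) = m^k` with `m ≥ 4` and `k` even, then `m - 1` and `2m - 1`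
are squarefree, and every prime `p` dividing `(m - 1)(2m - 1)` satisfies
`(p - 1) ∣ k`. -/
theorem squarefree_m_sub_one (a k m : ℕ) (ha : 0 < a) (hk : 0 < k)
    (hkeven : Even k) (hm4 : 4 ≤ m) (heq : a * S k m = m ^ k) :
    Squarefree (m - 1) ∧ Squarefree (2 * m - 1) ∧
      ∀ p : ℕ, p.Prime → p ∣ (m - 1) * (2 * m - 1) → (p - 1) ∣ k := by
  have hSne : ∀ p : ℕ, p.Prime → ¬ p ∣ m → ((S k m : ℕ) : ZMod p) ≠ 0 := by
    intro p pp hpm hS0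
    haveI : Fact p.Prime := ⟨pp⟩
    have hcast : ((a : ZMod p)) * ((S k m : ℕ) : ZMod p) = ((m : ZMod p)) ^ k := by
      exact_mod_cast congrArg (Nat.cast : ℕ → ZMod p) heq
    have hm0 : (m : ZMod p) ≠ 0 := by
      rw [Ne, ZMod.natCast_eq_zero_iff]; exact hpm
    have : ((m : ZMod p)) ^ k ≠ 0 := pow_ne_zero k hm0
    rw [← hcast, hS0, mul_zero] at this
    exact this rfl
  have hA : ∀ p : ℕ, p.Prime → p ∣ m - 1 → ¬ (p * p ∣ m - 1) ∧ (p - 1) ∣ k := by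
    intro p pp hdvd
    haveI : Fact p.Prime := ⟨pp⟩
    have hpm : ¬ p ∣ m := by
      intro h
      have h1 : p ∣ 1 := by
        have := Nat.dvd_sub h hdvd
        simpa [show m - (m - 1) = 1 by omega] using this
      exact pp.ne_one (Nat.dvd_one.mp h1)
    exact caseA k m hk hm4 hdvd (hSne p pp hpm)
  have hB : ∀ p : ℕ, p.Prime → p ∣ 2 * m - 1 → ¬ (p * p ∣ 2 * m - 1) ∧ (p - 1) ∣ k := by
    intro p pp hdvd
    haveI : Fact p.Prime := ⟨pp⟩
    have hpm : ¬ p ∣ m := by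
      intro h
      have h1 : p ∣ 1 := by
        have := Nat.dvd_sub (Dvd.dvd.mul_left h 2) hdvd
        simpa [show 2 * m - (2 * m - 1) = 1 by omega] using this
      exact pp.ne_one (Nat.dvd_one.mp h1)
    exact caseB k m hk hkeven hm4 hdvd (hSne p pp hpm)
  refine ⟨?_, ?_, ?_⟩
  · rw [Nat.squarefree_iff_prime_squarefree]
    intro x hx hxx
    have hxp : x.Prime := hx
    exact (hA x hxp (dvd_trans (dvd_mul_left x x) hxx)).1 hxx
  · rw [Nat.squarefree_iff_prime_squarefree]
    intro x hx hxx
    have hxp : x.Prime := hx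
    exact (hB x hxp (dvd_trans (dvd_mul_left x x) hxx)).1 hxx
  · intro p pp hdvd
    rcases (Nat.Prime.dvd_mul pp).mp hdvd with h | h
    · exact (hA p pp h).2
    · exact (hB p pp h).2
end

section
/- Suppose a, k, m are positive integers with m ≥ 4 and k even satisfying a·S_k(m) = m^k, and let p be a prime dividing (m + 1)(2m + 1). If (p − 1) | k, then ord_p((m + 1)(2m + 1)) = ord_p(a + 1) + 1; otherwise, ord_p((m + 1)(2m + 1)) ≤ ord_p(a + 1). -/
open Finset

/-- power sum over `range n`, in `ℤ`. -/
def PS (k n : ℕ) : ℤ := ∑ j ∈ Finset.range n, (j : ℤ) ^ k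

lemma binom_aux (x y : ℤ) (k : ℕ) :
    ∃ c : ℤ, (x + y) ^ (k + 1) = x ^ (k + 1) + (k + 1) * x ^ k * y + y ^ 2 * c := by
  induction k with
  | zero => exact ⟨0, by ring⟩
  | succ k ih =>
      obtain ⟨c, hc⟩ := ih
      refine ⟨(k + 1) * x ^ k + c * (x + y), ?_⟩
      have : (x + y) ^ (k + 2) = (x + y) ^ (k + 1) * (x + y) := by ring
      rw [this, hc]; push_cast; ring

lemma sum_range_mul_s16 {M : Type*} [AddCommMonoid M] (f : ℕ → M) (a N : ℕ) :
    ∑ j ∈ range (a * N), f j = ∑ q ∈ range a, ∑ r ∈ range N, f (q * N + r) := by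
  induction a with
  | zero => simp
  | succ a ih =>
      have h1 : (a + 1) * N = a * N + N := by ring
      rw [h1, Finset.sum_range_add, ih, Finset.sum_range_succ]

lemma modeq_sum {ι : Type*} (s : Finset ι) (f g : ι → ℤ) (n : ℤ)
    (h : ∀ i ∈ s, f i ≡ g i [ZMOD n]) : (∑ i ∈ s, f i) ≡ (∑ i ∈ s, g i) [ZMOD n] := by
  classical
  induction s using Finset.induction with
  | empty => simp [Int.ModEq.refl]
  | insert _ _ hx ih =>
      rw [Finset.sum_insert hx, Finset.sum_insert hx]
      exact (h _ (Finset.mem_insert_self _ _)).add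
        (ih fun i hi => h i (Finset.mem_insert_of_mem hi))

/-- periodicity: `PS k (t*N) ≡ t * PS k N [ZMOD N]`. -/
lemma PS_period (k t N : ℕ) : PS k (t * N) ≡ (t : ℤ) * PS k N [ZMOD (N : ℤ)] := by
  unfold PS
  rw [sum_range_mul_s16 (fun j => (j : ℤ) ^ k) t N]
  have : (t : ℤ) * ∑ j ∈ range N, (j : ℤ) ^ k
      = ∑ q ∈ range t, ∑ r ∈ range N, (r : ℤ) ^ k := by
    rw [Finset.sum_const, card_range]; push_cast; ring
  rw [this]
  refine modeq_sum _ _ _ _ fun q _ => modeq_sum _ _ _ _ fun r _ => ?_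
  have h1 : ((q * N + r : ℕ) : ℤ) ≡ (r : ℤ) [ZMOD (N : ℤ)] := by
    push_cast
    have : (N : ℤ) ∣ (q * N + r) - r := ⟨q, by ring⟩
    exact Int.ModEq.symm (Int.modEq_iff_dvd.mpr (by simpa using this))
  exact h1.pow k

/-- step: `PS (k+1) (a*N) ≡ a * PS (k+1) N + (k+1)*N*(∑q<a, q)*PS k N [ZMOD N^2]`. -/
lemma PS_step (k a N : ℕ) :
    PS (k + 1) (a * N) ≡ (a : ℤ) * PS (k + 1) N
      + ((k : ℤ) + 1) * N * (∑ q ∈ range a, (q : ℤ)) * PS k N [ZMOD (N : ℤ) ^ 2] := by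
  unfold PS
  rw [sum_range_mul_s16 (fun j => (j : ℤ) ^ (k + 1)) a N]
  have key : ∀ q ∈ range a, ∀ r ∈ range N,
      ((q * N + r : ℕ) : ℤ) ^ (k + 1)
        ≡ (r : ℤ) ^ (k + 1) + ((k : ℤ) + 1) * (r : ℤ) ^ k * ((q : ℤ) * N)
          [ZMOD (N : ℤ) ^ 2] := by
    intro q _ r _
    obtain ⟨c, hc⟩ := binom_aux (r : ℤ) ((q : ℤ) * N) k
    have hcast : ((q * N + r : ℕ) : ℤ) = (r : ℤ) + (q : ℤ) * N := by push_cast; ring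
    rw [hcast, hc]
    have : ((N : ℤ)) ^ 2 ∣ ((q : ℤ) * N) ^ 2 * c := ⟨(q : ℤ) ^ 2 * c, by ring⟩
    calc (r : ℤ) ^ (k + 1) + ((k : ℤ) + 1) * (r : ℤ) ^ k * ((q : ℤ) * N) + ((q : ℤ) * N) ^ 2 * c
        ≡ (r : ℤ) ^ (k + 1) + ((k : ℤ) + 1) * (r : ℤ) ^ k * ((q : ℤ) * N) + 0
          [ZMOD (N : ℤ) ^ 2] := (by
            exact ((Int.modEq_zero_iff_dvd).mpr this).add_left _)
      _ = _ := by ring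
  have h2 : (∑ q ∈ range a, ∑ r ∈ range N, ((q * N + r : ℕ) : ℤ) ^ (k + 1))
      ≡ ∑ q ∈ range a, ∑ r ∈ range N,
          ((r : ℤ) ^ (k + 1) + ((k : ℤ) + 1) * (r : ℤ) ^ k * ((q : ℤ) * N))
        [ZMOD (N : ℤ) ^ 2] :=
    modeq_sum _ _ _ _ fun q hq => modeq_sum _ _ _ _ fun r hr => key q hq r hr
  refine h2.trans ?_
  have inner : ∀ q : ℕ, ∑ r ∈ range N,
        ((r : ℤ) ^ (k + 1) + ((k : ℤ) + 1) * (r : ℤ) ^ k * ((q : ℤ) * N))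
      = (∑ r ∈ range N, (r : ℤ) ^ (k + 1))
        + ((k : ℤ) + 1) * (q : ℤ) * N * (∑ r ∈ range N, (r : ℤ) ^ k) := by
    intro q
    rw [Finset.sum_add_distrib]
    congr 1
    rw [Finset.mul_sum]
    exact Finset.sum_congr rfl fun r _ => by ring
  simp only [inner]
  rw [Finset.sum_add_distrib, Finset.sum_const, card_range, nsmul_eq_mul]
  have : ∑ q ∈ range a, ((k : ℤ) + 1) * (q : ℤ) * N * (∑ r ∈ range N, (r : ℤ) ^ k)
      = ((k : ℤ) + 1) * N * (∑ q ∈ range a, (q : ℤ)) * (∑ r ∈ range N, (r : ℤ) ^ k) := by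
    rw [← Finset.sum_mul]
    congr 1
    rw [Finset.mul_sum]
    exact Finset.sum_congr rfl fun q _ => by ring
  rw [this]

lemma PS_base (p : ℕ) (hp : p.Prime) (K : ℕ) (hK : 0 < K) :
    PS K p ≡ (if (p - 1) ∣ K then -1 else 0) [ZMOD (p : ℤ)] := by
  haveI : Fact p.Prime := ⟨hp⟩
  rw [← ZMod.intCast_eq_intCast_iff]
  unfold PS
  push_cast
  have hbij : ∑ j ∈ range p, ((j : ZMod p)) ^ K = ∑ x : ZMod p, x ^ K := by
    refine Finset.sum_nbij' (fun j => (j : ZMod p)) (fun x => x.val) ?_ ?_ ?_ ?_ ?_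
    · intro a _; exact Finset.mem_univ _
    · intro x _; exact Finset.mem_range.mpr (ZMod.val_lt x)
    · intro a ha; exact ZMod.val_cast_of_lt (Finset.mem_range.mp ha)
    · intro x _; exact ZMod.natCast_rightInverse x
    · intro a _; rfl
  rw [hbij]
  have h0 : ∑ x : ZMod p, x ^ K = ∑ x : (ZMod p)ˣ, ((x : ZMod p)) ^ K := by
    classical
    let φ : (ZMod p)ˣ ↪ ZMod p := ⟨fun x => x, Units.val_injective⟩
    have hmap : Finset.univ.map φ = Finset.univ \ {0} := by
      ext x
      simp only [Finset.mem_map, Finset.mem_univ, Function.Embedding.coeFn_mk, true_and,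
        Finset.mem_sdiff, Finset.mem_singleton, φ]
      exact isUnit_iff_ne_zero
    calc ∑ x : ZMod p, x ^ K
        = ∑ x ∈ Finset.univ \ {(0 : ZMod p)}, x ^ K := by
          rw [← Finset.sum_sdiff (Finset.subset_univ {(0 : ZMod p)}), Finset.sum_singleton,
            zero_pow hK.ne', add_zero]
      _ = ∑ x : (ZMod p)ˣ, ((x : ZMod p)) ^ K := by
          rw [← hmap, Finset.sum_map]; rfl
  rw [h0]
  have := FiniteField.sum_pow_units (ZMod p) K
  rw [ZMod.card] at this
  rw [this]

lemma p_dvd_K_mul_G (p : ℕ) (hp : p.Prime) (K : ℕ) (hKeven : Even K) :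
    (p : ℤ) ∣ (K : ℤ) * (∑ q ∈ range p, (q : ℤ)) := by
  have hG2 : (∑ q ∈ range p, (q : ℤ)) * 2 = (p : ℤ) * ((p : ℤ) - 1) := by
    have h := Finset.sum_range_id_mul_two p
    have h2 := congrArg (fun n : ℕ => (n : ℤ)) h
    push_cast [Nat.cast_sub (by have := hp.one_lt; omega : 1 ≤ p)] at h2
    exact h2
  rcases hp.eq_two_or_odd' with rfl | hodd
  · obtain ⟨t, rfl⟩ := hKeven
    exact Dvd.dvd.mul_right ⟨(t : ℤ), by push_cast; ring⟩ _
  · have hpz : Prime (p : ℤ) := Nat.prime_iff_prime_int.mp hp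
    have h2 : (p : ℤ) ∣ (∑ q ∈ range p, (q : ℤ)) * 2 := hG2 ▸ Dvd.intro _ rfl
    rcases hpz.dvd_mul.mp h2 with h | h
    · exact h.mul_left _
    · exfalso
      have hle : (p : ℤ) ≤ 2 := Int.le_of_dvd (by norm_num) h
      have hle2 : p ≤ 2 := by exact_mod_cast hle
      have hp2 : p = 2 := le_antisymm hle2 hp.two_le
      subst hp2
      exact (by decide : ¬ Odd 2) hodd

lemma PS_prime_pow (p : ℕ) (hp : p.Prime) (K : ℕ) (hK : 0 < K) (hKeven : Even K) :
    ∀ l : ℕ, PS K (p ^ (l + 1)) ≡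
      (if (p - 1) ∣ K then -((p : ℤ) ^ l) else 0) [ZMOD (p : ℤ) ^ (l + 1)] := by
  obtain ⟨k', rfl⟩ : ∃ k', K = k' + 1 := ⟨K - 1, by omega⟩
  intro l
  induction l with
  | zero => simpa using PS_base p hp (k' + 1) hK
  | succ l ih =>
      have hNN : p ^ (l + 1 + 1) = p * p ^ (l + 1) := by ring
      have hstep := PS_step k' p (p ^ (l + 1))
      rw [← hNN] at hstep
      have hmod : ((p : ℤ)) ^ (l + 1 + 1) ∣ ((p ^ (l + 1) : ℕ) : ℤ) ^ 2 := by
        push_cast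
        rw [← pow_mul]
        exact pow_dvd_pow _ (by omega)
      have hstep2 := hstep.of_dvd hmod
      -- kill the cross term
      have hcross : ((p : ℤ)) ^ (l + 1 + 1) ∣
          ((k' : ℤ) + 1) * ((p ^ (l + 1) : ℕ) : ℤ) * (∑ q ∈ range p, (q : ℤ))
            * PS k' (p ^ (l + 1)) := by
        have h1 := p_dvd_K_mul_G p hp (k' + 1) hKeven
        push_cast at h1 ⊢
        have : (p : ℤ) ^ (l + 1 + 1) = (p : ℤ) ^ (l + 1) * (p : ℤ) := by ring
        rw [this]
        calc (p : ℤ) ^ (l + 1) * (p : ℤ)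
            ∣ (p : ℤ) ^ (l + 1) * (((k' : ℤ) + 1) * (∑ q ∈ range p, (q : ℤ))
              * PS k' (p ^ (l + 1))) := mul_dvd_mul_left _ (h1.mul_right _)
          _ = ((k' : ℤ) + 1) * ((p : ℤ)) ^ (l + 1) * (∑ q ∈ range p, (q : ℤ))
              * PS k' (p ^ (l + 1)) := by ring
      have hstep3 : PS (k' + 1) (p ^ (l + 1 + 1)) ≡
          (p : ℤ) * PS (k' + 1) (p ^ (l + 1)) [ZMOD (p : ℤ) ^ (l + 1 + 1)] := by
        refine hstep2.trans ?_
        have h0 : ((k' : ℤ) + 1) * ((p ^ (l + 1) : ℕ) : ℤ) * (∑ q ∈ range p, (q : ℤ))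
            * PS k' (p ^ (l + 1)) ≡ 0 [ZMOD (p : ℤ) ^ (l + 1 + 1)] :=
          (Int.modEq_zero_iff_dvd).mpr hcross
        calc (p : ℤ) * PS (k' + 1) (p ^ (l + 1))
              + ((k' : ℤ) + 1) * ((p ^ (l + 1) : ℕ) : ℤ) * (∑ q ∈ range p, (q : ℤ))
                * PS k' (p ^ (l + 1))
            ≡ (p : ℤ) * PS (k' + 1) (p ^ (l + 1)) + 0 [ZMOD (p : ℤ) ^ (l + 1 + 1)] :=
              (Int.ModEq.refl _).add h0
          _ = (p : ℤ) * PS (k' + 1) (p ^ (l + 1)) := by ring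
      have hmul := ih.mul_left' (c := (p : ℤ))
      have hpow : (p : ℤ) * (p : ℤ) ^ (l + 1) = (p : ℤ) ^ (l + 1 + 1) := by ring
      rw [hpow] at hmul
      refine hstep3.trans (hmul.trans ?_)
      split_ifs
      · rw [show (p : ℤ) * -(p : ℤ) ^ l = -(p : ℤ) ^ (l + 1) by ring]
      · rw [mul_zero]

lemma val_eq_of_modeq (p : ℕ) (hp : p.Prime) (x : ℕ) (hx : x ≠ 0) (u : ℤ)
    (hu : ¬ (p : ℤ) ∣ u) (l : ℕ)
    (h : (x : ℤ) ≡ u * (p : ℤ) ^ l [ZMOD (p : ℤ) ^ (l + 1)]) : padicValNat p x = l := by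
  haveI : Fact p.Prime := ⟨hp⟩
  obtain ⟨z, hz⟩ := h.dvd
  have hxz : (x : ℤ) = (p : ℤ) ^ l * (u - p * z) := by linear_combination -hz
  have hd1 : p ^ l ∣ x := by
    have h1 : ((p ^ l : ℕ) : ℤ) ∣ (x : ℤ) := by push_cast; exact ⟨_, hxz⟩
    exact_mod_cast h1
  have hd2 : ¬ p ^ (l + 1) ∣ x := by
    intro hdvd
    have h1 : ((p : ℤ)) ^ (l + 1) ∣ (x : ℤ) := by exact_mod_cast hdvd
    rw [hxz, pow_succ] at h1
    have hpne : ((p : ℤ)) ^ l ≠ 0 := pow_ne_zero _ (by exact_mod_cast hp.ne_zero)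
    have h2 : (p : ℤ) ∣ u - p * z := (mul_dvd_mul_iff_left hpne).mp h1
    exact hu (by have := h2.add (Dvd.intro z rfl); simpa using this)
  have hle : l ≤ padicValNat p x := (padicValNat_dvd_iff_le hx).mp hd1
  have hlt : ¬ (l + 1 ≤ padicValNat p x) := fun hc => hd2 ((padicValNat_dvd_iff_le hx).mpr hc)
  omega

lemma PS_reflect (k m : ℕ) (hk : k ≠ 0) (hkeven : Even k) :
    PS k (2 * m + 1) ≡ 2 * PS k (m + 1) [ZMOD ((2 * m + 1 : ℕ) : ℤ)] := by
  unfold PS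
  have hsplit : (∑ j ∈ range (2 * m + 1), (j : ℤ) ^ k)
      = ∑ j ∈ range (m + 1), (j : ℤ) ^ k
        + ∑ i ∈ range m, ((m + 1 + i : ℕ) : ℤ) ^ k := by
    rw [show 2 * m + 1 = (m + 1) + m by ring, Finset.sum_range_add]
  rw [hsplit]
  have hPS1 : ∑ j ∈ range (m + 1), (j : ℤ) ^ k
      = (∑ j ∈ range m, ((j + 1 : ℕ) : ℤ) ^ k) := by
    rw [Finset.sum_range_succ' (fun j => (j : ℤ) ^ k) m]
    simp [zero_pow hk]
  have hcong : (∑ i ∈ range m, ((m + 1 + i : ℕ) : ℤ) ^ k)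
      ≡ (∑ i ∈ range m, ((m - i : ℕ) : ℤ) ^ k) [ZMOD ((2 * m + 1 : ℕ) : ℤ)] := by
    refine modeq_sum _ _ _ _ fun r hr => ?_
    have hrm : r < m := Finset.mem_range.mp hr
    have h1 : ((m + 1 + r : ℕ) : ℤ) ≡ -((m - r : ℕ) : ℤ) [ZMOD ((2 * m + 1 : ℕ) : ℤ)] := by
      refine Int.modEq_iff_dvd.mpr ⟨-1, ?_⟩
      push_cast [Nat.cast_sub hrm.le]
      ring
    calc ((m + 1 + r : ℕ) : ℤ) ^ k
        ≡ (-((m - r : ℕ) : ℤ)) ^ k [ZMOD ((2 * m + 1 : ℕ) : ℤ)] := h1.pow k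
      _ = ((m - r : ℕ) : ℤ) ^ k := Even.neg_pow hkeven _
  have hrefl : (∑ i ∈ range m, ((m - i : ℕ) : ℤ) ^ k)
      = ∑ j ∈ range m, ((j + 1 : ℕ) : ℤ) ^ k := by
    have h1 : ∀ i ∈ range m, ((m - i : ℕ) : ℤ) ^ k = ((m - 1 - i + 1 : ℕ) : ℤ) ^ k := by
      intro i hi
      have : m - i = m - 1 - i + 1 := by have := Finset.mem_range.mp hi; omega
      rw [this]
    rw [Finset.sum_congr rfl h1]
    exact Finset.sum_range_reflect (fun j => ((j + 1 : ℕ) : ℤ) ^ k) m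
  calc ∑ j ∈ range (m + 1), (j : ℤ) ^ k + ∑ i ∈ range m, ((m + 1 + i : ℕ) : ℤ) ^ k
      ≡ ∑ j ∈ range (m + 1), (j : ℤ) ^ k + ∑ i ∈ range m, ((m - i : ℕ) : ℤ) ^ k
        [ZMOD ((2 * m + 1 : ℕ) : ℤ)] := (Int.ModEq.refl _).add hcong
    _ = 2 * ∑ j ∈ range (m + 1), (j : ℤ) ^ k := by
        rw [hrefl, ← hPS1]; ring

lemma main_helper (p : ℕ) (hp : p.Prime) (k a n : ℕ) (hk : 0 < k) (hkeven : Even k)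
    (hn : 0 < n) (hpn : p ∣ n) (hpa : ¬ p ∣ a) (x : ℕ) (hx : x ≠ 0)
    (hxv : padicValNat p x = padicValNat p (a + 1))
    (hcong : (x : ℤ) ≡ (a : ℤ) * PS k n [ZMOD (p : ℤ) ^ (padicValNat p n)]) :
    ((p - 1) ∣ k → padicValNat p n = padicValNat p (a + 1) + 1) ∧
      (¬ (p - 1) ∣ k → padicValNat p n ≤ padicValNat p (a + 1)) := by
  haveI : Fact p.Prime := ⟨hp⟩
  obtain ⟨l', hl⟩ : ∃ l', padicValNat p n = l' + 1 :=
    ⟨padicValNat p n - 1, by have := one_le_padicValNat_of_dvd hn.ne' hpn; omega⟩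
  rw [hl] at hcong ⊢
  set t := n / p ^ (l' + 1) with htdef
  have hdvd : p ^ (l' + 1) ∣ n := by rw [← hl]; exact pow_padicValNat_dvd
  have ht : n = t * p ^ (l' + 1) := by rw [htdef, Nat.div_mul_cancel hdvd]
  have hpt : ¬ p ∣ t := by
    intro ⟨s, hs⟩
    have : p ^ (l' + 1 + 1) ∣ n := ⟨s, by rw [ht, hs]; ring⟩
    exact pow_succ_padicValNat_not_dvd (p := p) hn.ne' (by rwa [hl])
  have h1 : PS k n ≡ (t : ℤ) * PS k (p ^ (l' + 1)) [ZMOD (p : ℤ) ^ (l' + 1)] := by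
    have := PS_period k t (p ^ (l' + 1))
    rw [← ht] at this
    have hcast : ((p ^ (l' + 1) : ℕ) : ℤ) = (p : ℤ) ^ (l' + 1) := by push_cast; rfl
    rwa [hcast] at this
  have h2 := PS_prime_pow p hp k hk hkeven l'
  have h3 : (x : ℤ) ≡ (a : ℤ) * ((t : ℤ) *
      (if (p - 1) ∣ k then -((p : ℤ) ^ l') else 0)) [ZMOD (p : ℤ) ^ (l' + 1)] :=
    hcong.trans ((h1.trans (h2.mul_left _)).mul_left _)
  constructor
  · intro hdk
    rw [if_pos hdk] at h3
    have h4 : (x : ℤ) ≡ (-((a : ℤ) * t)) * (p : ℤ) ^ l' [ZMOD (p : ℤ) ^ (l' + 1)] := by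
      refine h3.trans ?_
      rw [show (a : ℤ) * ((t : ℤ) * -((p : ℤ) ^ l')) = (-((a : ℤ) * t)) * (p : ℤ) ^ l' by ring]
    have hu : ¬ (p : ℤ) ∣ -((a : ℤ) * t) := by
      rw [Int.dvd_neg]
      intro hdvd2
      rcases (Nat.prime_iff_prime_int.mp hp).dvd_mul.mp hdvd2 with h | h
      · exact hpa (by exact_mod_cast h)
      · exact hpt (by exact_mod_cast h)
    have := val_eq_of_modeq p hp x hx _ hu l' h4
    omega
  · intro hdk
    rw [if_neg hdk] at h3
    have h4 : ((p : ℤ)) ^ (l' + 1) ∣ (x : ℤ) := by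
      have : (x : ℤ) ≡ 0 [ZMOD (p : ℤ) ^ (l' + 1)] := by simpa using h3
      exact Int.dvd_of_emod_eq_zero (by simpa [Int.ModEq] using this)
    have h5 : p ^ (l' + 1) ∣ x := by exact_mod_cast h4
    have := (padicValNat_dvd_iff_le hx).mp h5
    omega

/-- If `a·S_k(m) = m^k` with `m ≥ 4` and `k` even, and `p` is a prime dividing
`(m + 1)(2m + 1)`, then `ord_p((m+1)(2m+1)) = ord_p(a+1) + 1` if `(p-1) ∣ k`,
and `ord_p((m+1)(2m+1)) ≤ ord_p(a+1)` otherwise. -/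
theorem ord_p_m_add_one (a k m p : ℕ) (ha : 0 < a) (hk : 0 < k)
    (hkeven : Even k) (hm4 : 4 ≤ m) (heq : a * S k m = m ^ k)
    (hp : p.Prime) (hpdvd : p ∣ (m + 1) * (2 * m + 1)) :
    ((p - 1) ∣ k →
        padicValNat p ((m + 1) * (2 * m + 1)) = padicValNat p (a + 1) + 1) ∧
      (¬ (p - 1) ∣ k →
        padicValNat p ((m + 1) * (2 * m + 1)) ≤ padicValNat p (a + 1)) := by
  haveI : Fact p.Prime := ⟨hp⟩
  -- the key natural-number identity
  have hsum : ∑ j ∈ range (m + 1), j ^ k = S k m + m ^ k := by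
    rw [Finset.range_eq_Ico, Finset.sum_eq_sum_Ico_succ_bot (by omega : 0 < m + 1),
      Finset.sum_Ico_succ_top (by omega : 1 ≤ m)]
    simp [S, zero_pow hk.ne']
  have hkey : a * (∑ j ∈ range (m + 1), j ^ k) = (a + 1) * m ^ k := by
    rw [hsum, Nat.mul_add, heq]; ring
  have hPScast : PS k (m + 1) = ((∑ j ∈ range (m + 1), j ^ k : ℕ) : ℤ) := by
    unfold PS; push_cast; rfl
  by_cases hpm1 : p ∣ m + 1
  · -- p ∣ m + 1, so p ∤ 2m + 1
    have hpn2 : ¬ p ∣ 2 * m + 1 := by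
      intro h
      have h1 : p ∣ 2 * (m + 1) - (2 * m + 1) := Nat.dvd_sub (hpm1.mul_left 2) h
      rw [show 2 * (m + 1) - (2 * m + 1) = 1 by omega] at h1
      exact hp.one_lt.ne' (Nat.dvd_one.mp h1)
    have hpm : ¬ p ∣ m := fun h => by
      have h1 : p ∣ m + 1 - m := Nat.dvd_sub hpm1 h
      rw [show m + 1 - m = 1 by omega] at h1
      exact hp.one_lt.ne' (Nat.dvd_one.mp h1)
    have hpa : ¬ p ∣ a := fun h => hpm (hp.dvd_of_dvd_pow (heq ▸ h.mul_right (S k m)))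
    have hpmk : padicValNat p (m ^ k) = 0 :=
      padicValNat.eq_zero_of_not_dvd fun h => hpm (hp.dvd_of_dvd_pow h)
    have hxv : padicValNat p ((a + 1) * m ^ k) = padicValNat p (a + 1) := by
      rw [padicValNat.mul (by omega) (by positivity), hpmk, add_zero]
    have hcong : (((a + 1) * m ^ k : ℕ) : ℤ) ≡ (a : ℤ) * PS k (m + 1)
        [ZMOD (p : ℤ) ^ (padicValNat p (m + 1))] := by
      rw [hPScast, show ((a:ℤ)) * ((∑ j ∈ range (m + 1), j ^ k : ℕ) : ℤ)
        = (((a * ∑ j ∈ range (m + 1), j ^ k : ℕ)) : ℤ) by push_cast; ring, hkey]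
    have hmain := main_helper p hp k a (m + 1) hk hkeven (by omega) hpm1 hpa
      ((a + 1) * m ^ k) (by positivity) hxv hcong
    have hvprod : padicValNat p ((m + 1) * (2 * m + 1)) = padicValNat p (m + 1) := by
      rw [padicValNat.mul (by omega) (by omega), padicValNat.eq_zero_of_not_dvd hpn2, add_zero]
    rw [hvprod]
    exact hmain
  · -- p ∣ 2m + 1
    have hpm2 : p ∣ 2 * m + 1 := (hp.dvd_mul.mp hpdvd).resolve_left hpm1
    have hp2 : p ≠ 2 := by
      rintro rfl
      obtain ⟨c, hc⟩ := hpm2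
      omega
    have hpm : ¬ p ∣ m := fun h => by
      have h1 : p ∣ 2 * m + 1 - 2 * m := Nat.dvd_sub hpm2 (h.mul_left 2)
      rw [show 2 * m + 1 - 2 * m = 1 by omega] at h1
      exact hp.one_lt.ne' (Nat.dvd_one.mp h1)
    have hpa : ¬ p ∣ a := fun h => hpm (hp.dvd_of_dvd_pow (heq ▸ h.mul_right (S k m)))
    have hpmk : padicValNat p (m ^ k) = 0 :=
      padicValNat.eq_zero_of_not_dvd fun h => hpm (hp.dvd_of_dvd_pow h)
    have hp2' : ¬ p ∣ 2 := fun h => hp2 ((Nat.prime_dvd_prime_iff_eq hp Nat.prime_two).mp h)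
    have hxv : padicValNat p (2 * ((a + 1) * m ^ k)) = padicValNat p (a + 1) := by
      rw [padicValNat.mul (by omega) (by positivity),
        padicValNat.mul (by omega) (by positivity), hpmk,
        padicValNat.eq_zero_of_not_dvd hp2']
      omega
    have hldvd : ((p : ℤ)) ^ (padicValNat p (2 * m + 1)) ∣ ((2 * m + 1 : ℕ) : ℤ) := by
      have := pow_padicValNat_dvd (p := p) (n := 2 * m + 1)
      exact_mod_cast this
    have hcong : ((2 * ((a + 1) * m ^ k) : ℕ) : ℤ) ≡ (a : ℤ) * PS k (2 * m + 1)
        [ZMOD (p : ℤ) ^ (padicValNat p (2 * m + 1))] := by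
      have hrefl := ((PS_reflect k m hk.ne' hkeven).of_dvd hldvd).mul_left (a : ℤ)
      refine Int.ModEq.symm (hrefl.trans ?_)
      rw [hPScast, show (a : ℤ) * (2 * ((∑ j ∈ range (m + 1), j ^ k : ℕ) : ℤ))
        = ((2 * (a * ∑ j ∈ range (m + 1), j ^ k) : ℕ) : ℤ) by push_cast; ring, hkey]
    have hmain := main_helper p hp k a (2 * m + 1) hk hkeven (by omega) hpm2 hpa
      (2 * ((a + 1) * m ^ k)) (by positivity) hxv hcong
    have hvprod : padicValNat p ((m + 1) * (2 * m + 1)) = padicValNat p (2 * m + 1) := by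
      rw [padicValNat.mul (by omega) (by omega), padicValNat.eq_zero_of_not_dvd hpm1, zero_add]
    rw [hvprod]
    exact hmain
end

section
/- Suppose a, k, m are positive integers with m ≥ 2 satisfying a·S_k(m) = m^k. Then k + 1 < a·m < (a + 1)(k + 1). -/
open Finset

lemma gs_eq (k j : ℕ) :
    ((j : ℤ) + 1) ^ (k + 1) - (j : ℤ) ^ (k + 1)
      = ∑ i ∈ range (k + 1), ((j : ℤ) + 1) ^ i * (j : ℤ) ^ (k - i) := by
  have hgs := geom_sum₂_mul ((j : ℤ) + 1) (j : ℤ) (k + 1)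
  simp only [add_sub_cancel_left, mul_one] at hgs
  rw [← hgs]
  rfl

lemma key1 (k j : ℕ) (hk : 0 < k) :
    ((k : ℤ) + 1) * (j : ℤ) ^ k < ((j : ℤ) + 1) ^ (k + 1) - (j : ℤ) ^ (k + 1) := by
  rw [gs_eq]
  have hrw : ((k : ℤ) + 1) * (j : ℤ) ^ k = ∑ _i ∈ range (k + 1), (j : ℤ) ^ k := by
    rw [Finset.sum_const, card_range]; push_cast; ring
  rw [hrw]
  refine Finset.sum_lt_sum (fun i hi => ?_) ⟨k, by simp, ?_⟩
  · have hik : i ≤ k := by simpa [Nat.lt_succ_iff] using hi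
    calc (j : ℤ) ^ k = (j : ℤ) ^ i * (j : ℤ) ^ (k - i) := by
          rw [← pow_add, Nat.add_sub_cancel' hik]
      _ ≤ ((j : ℤ) + 1) ^ i * (j : ℤ) ^ (k - i) := by
          apply mul_le_mul_of_nonneg_right
          · exact pow_le_pow_left₀ (by positivity) (by linarith) i
          · positivity
  · simp only [Nat.sub_self, pow_zero, mul_one]
    exact pow_lt_pow_left₀ (by linarith) (by positivity) hk.ne'

lemma key2 (k j : ℕ) (hk : 0 < k) :
    ((j : ℤ) + 1) ^ (k + 1) - (j : ℤ) ^ (k + 1) < ((k : ℤ) + 1) * ((j : ℤ) + 1) ^ k := by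
  rw [gs_eq]
  have hrw : ((k : ℤ) + 1) * ((j : ℤ) + 1) ^ k = ∑ _i ∈ range (k + 1), ((j : ℤ) + 1) ^ k := by
    rw [Finset.sum_const, card_range]; push_cast; ring
  rw [hrw]
  refine Finset.sum_lt_sum (fun i hi => ?_) ⟨0, by simp, ?_⟩
  · have hik : i ≤ k := by simpa [Nat.lt_succ_iff] using hi
    calc ((j : ℤ) + 1) ^ i * (j : ℤ) ^ (k - i)
        ≤ ((j : ℤ) + 1) ^ i * ((j : ℤ) + 1) ^ (k - i) := by
          apply mul_le_mul_of_nonneg_left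
          · exact pow_le_pow_left₀ (by positivity) (by linarith) _
          · positivity
      _ = ((j : ℤ) + 1) ^ k := by rw [← pow_add, Nat.add_sub_cancel' hik]
  · simp only [pow_zero, one_mul, Nat.sub_zero]
    exact pow_lt_pow_left₀ (by linarith) (by positivity) hk.ne'

/-- If `a·S_k(m) = m^k` with `m ≥ 2`, then `k + 1 < a·m < (a + 1)(k + 1)`. -/
theorem am_bounds (a k m : ℕ) (ha : 0 < a) (hk : 0 < k) (hm : 2 ≤ m)
    (heq : a * S k m = m ^ k) :
    k + 1 < a * m ∧ a * m < (a + 1) * (k + 1) := by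
  set Sz : ℤ := (S k m : ℤ) with hSz
  have hS' : Sz = ∑ j ∈ range m, (j : ℤ) ^ k := by
    have hsub : (∑ j ∈ Finset.Ico 1 m, (j : ℤ) ^ k) = ∑ j ∈ range m, (j : ℤ) ^ k := by
      rw [range_eq_Ico]
      refine Finset.sum_subset (Finset.Ico_subset_Ico (Nat.zero_le 1) le_rfl) ?_
      intro x hx hx'
      have hx0 : x = 0 := by
        simp only [Finset.mem_Ico] at hx hx'
        omega
      simp [hx0, zero_pow hk.ne']
    rw [hSz, ← hsub]
    unfold S
    push_cast
    rfl
  have htel : ∑ j ∈ range m, ((((j : ℤ) + 1)) ^ (k + 1) - (j : ℤ) ^ (k + 1)) = (m : ℤ) ^ (k + 1) := by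
    have h := Finset.sum_range_sub (fun j => (j : ℤ) ^ (k + 1)) m
    simp only [Nat.cast_zero, Nat.cast_add, Nat.cast_one] at h
    rw [zero_pow (Nat.succ_ne_zero k), sub_zero] at h
    rw [← h]
  have hne : (range m).Nonempty := ⟨0, by simp; omega⟩
  -- Claim 1
  have claim1 : ((k : ℤ) + 1) * Sz < (m : ℤ) ^ (k + 1) := by
    rw [hS', Finset.mul_sum, ← htel]
    exact Finset.sum_lt_sum_of_nonempty hne (fun j _ => key1 k j hk)
  -- index shift
  have hshift : ∑ j ∈ range m, ((j : ℤ) + 1) ^ k = Sz + (m : ℤ) ^ k := by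
    have h1 := Finset.sum_range_succ' (fun j : ℕ => (j : ℤ) ^ k) m
    simp only [Nat.cast_zero, Nat.cast_add, Nat.cast_one] at h1
    rw [zero_pow hk.ne', add_zero] at h1
    rw [← h1, Finset.sum_range_succ, ← hS']
  have claim2 : (m : ℤ) ^ (k + 1) < ((k : ℤ) + 1) * (Sz + (m : ℤ) ^ k) := by
    rw [← hshift, Finset.mul_sum, ← htel]
    exact Finset.sum_lt_sum_of_nonempty hne (fun j _ => key2 k j hk)
  have hSpos : 0 < Sz := by
    rw [hSz]
    have : 0 < S k m := by
      unfold S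
      refine Finset.sum_pos (fun i hi => ?_) ⟨1, by simp; omega⟩
      simp only [Finset.mem_Ico] at hi
      exact pow_pos (by omega) k
    exact_mod_cast this
  have heqz : (a : ℤ) * Sz = (m : ℤ) ^ k := by rw [hSz]; exact_mod_cast heq
  have hmk : (m : ℤ) ^ (k + 1) = ((a : ℤ) * m) * Sz := by
    rw [pow_succ]
    rw [← heqz]; ring
  constructor
  · have h : ((k : ℤ) + 1) * Sz < ((a : ℤ) * m) * Sz := by rw [← hmk]; exact claim1
    have := lt_of_mul_lt_mul_right h hSpos.le
    exact_mod_cast this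
  · have h : ((a : ℤ) * m) * Sz < (((a : ℤ) + 1) * ((k : ℤ) + 1)) * Sz := by
      rw [← hmk]
      calc (m : ℤ) ^ (k + 1) < ((k : ℤ) + 1) * (Sz + (m : ℤ) ^ k) := claim2
        _ = (((a : ℤ) + 1) * ((k : ℤ) + 1)) * Sz := by rw [← heqz]; ring
    have := lt_of_mul_lt_mul_right h hSpos.le
    exact_mod_cast this
end
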